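/- arXiv:1603.02960 — 2 statements merged into one kernel-verified Lean document; each statement's English description precedes it below -/
import Mathlib

section
/- Let F be a graph on n vertices and let v be a vertex of F of degree d(v). Then the number of induced cycles of F containing v satisfies f_v(F) ≤ C(d(v),2) · 3^{(n − d(v) − 1)/3}, where C(d(v),2) is the binomial coefficient d(v) choose 2. -/
set_option linter.unusedSectionVars false
set_option maxHeartbeats 1000000

namespace ExtremalInducedCycles

section Machinery

variable {V : Type*} [Fintype V] [DecidableEq V] {G : SimpleGraph V}

def Step (G : SimpleGraph V) (s : Set V) (x y : V) : Prop := x ∈ s ∧ y ∈ s ∧ G.Adj x y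

def Rtg (G : SimpleGraph V) (s : Set V) : V → V → Prop := Relation.ReflTransGen (Step G s)

def nbr (G : SimpleGraph V) (s : Set V) (w : V) : Set V := {x | x ∈ s ∧ G.Adj w x}

lemma Rtg.symm {s : Set V} {x y : V} (h : Rtg G s x y) : Rtg G s y x :=
  haveI : Std.Symm (Step G s) := ⟨fun _ _ h => ⟨h.2.1, h.1, h.2.2.symm⟩⟩
  (Relation.ReflTransGen.stdSymm (r := Step G s)).symm _ _ h

lemma walk_to_rtg {s : Set V} : ∀ {x y : ↥s} (_ : (G.induce s).Walk x y), Rtg G s ↑x ↑y := by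
  intro x y p
  induction p with
  | nil => exact Relation.ReflTransGen.refl
  | @cons u w _ h _ ih =>
      exact Relation.ReflTransGen.head ⟨u.2, w.2, by simpa using h⟩ ih

lemma conn_to_rtg {s : Set V} (h : (G.induce s).Connected) :
    ∀ x ∈ s, ∀ y ∈ s, Rtg G s x y := by
  intro x hx y hy
  exact (h.preconnected ⟨x, hx⟩ ⟨y, hy⟩).elim fun p => walk_to_rtg p

lemma nbr_diff (s : Set V) (A : Set V) (w : V) : nbr G (s \ A) w = nbr G s w \ A := by
  ext x; simp [nbr, Set.mem_diff]; tauto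

lemma closed_rtg {s C : Set V} (hC : ∀ x ∈ C, nbr G s x ⊆ C) {x y : V}
    (h : Rtg G s x y) (hx : x ∈ C) : y ∈ C := by
  induction h with
  | refl => exact hx
  | tail _ h ih => exact hC _ ih ⟨h.2.1, h.2.2⟩

/-- Deleting a vertex with at most one neighbor in `s` preserves reachability
among the other vertices. -/
lemma rtg_del_unique {s : Set V} {a : V}
    (hu : ∀ w w', w ∈ s → G.Adj a w → w' ∈ s → G.Adj a w' → w = w')
    {x y : V} (hxy : Rtg G s x y) (hx : x ≠ a) (hy : y ≠ a) :
    Rtg G (s \ {a}) x y := by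
  have main : ∀ {c} (h : Rtg G s c y),
      (c ≠ a → Rtg G (s \ {a}) c y) ∧
      (c = a → ∀ w, w ∈ s → G.Adj a w → Rtg G (s \ {a}) w y) := by
    intro c h
    induction h using Relation.ReflTransGen.head_induction_on with
    | refl =>
        refine ⟨fun _ => Relation.ReflTransGen.refl, fun hya => absurd hya hy⟩
    | @head c z hcz hzy ih =>
        obtain ⟨hcs, hzs, hadj⟩ := hcz
        constructor
        · intro hca
          by_cases hza : z = a
          · subst hza
            exact ih.2 rfl c hcs hadj.symm
          · exact Relation.ReflTransGen.head ⟨⟨hcs, hca⟩, ⟨hzs, hza⟩, hadj⟩ (ih.1 hza)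
        · intro hca w hws hadjw
          have hadj' : G.Adj a z := hca ▸ hadj
          have hza : z ≠ a := fun h => G.irrefl (h ▸ hadj')
          have : w = z := hu w z hws hadjw hzs hadj'
          exact this ▸ ih.1 hza
  exact (main hxy).1 hx

/-- Deleting a vertex `v` whose neighbors in `s` are `{a, b}` preserves reachability
among the other vertices, provided `a` and `b` are still joined after deletion. -/
lemma rtg_del_two {s : Set V} {v a b : V}
    (hnbrs : ∀ w, w ∈ s → G.Adj v w → w = a ∨ w = b)
    (hab : Rtg G (s \ {v}) a b)
    {x y : V} (hxy : Rtg G s x y) (hx : x ≠ v) (hy : y ≠ v) :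
    Rtg G (s \ {v}) x y := by
  have main : ∀ {c} (h : Rtg G s c y),
      (c ≠ v → Rtg G (s \ {v}) c y) ∧
      (c = v → Rtg G (s \ {v}) a y ∧ Rtg G (s \ {v}) b y) := by
    intro c h
    induction h using Relation.ReflTransGen.head_induction_on with
    | refl =>
        refine ⟨fun _ => Relation.ReflTransGen.refl, fun hyv => absurd hyv hy⟩
    | @head c z hcz hzy ih =>
        obtain ⟨hcs, hzs, hadj⟩ := hcz
        constructor
        · intro hcv
          by_cases hzv : z = v
          · subst hzv
            rcases hnbrs c hcs hadj.symm with h | h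
            · exact h ▸ (ih.2 rfl).1
            · exact h ▸ (ih.2 rfl).2
          · exact Relation.ReflTransGen.head ⟨⟨hcs, hcv⟩, ⟨hzs, hzv⟩, hadj⟩ (ih.1 hzv)
        · intro hcv
          have hadj' : G.Adj v z := hcv ▸ hadj
          have hzv : z ≠ v := fun h => G.irrefl (h ▸ hadj')
          have hz : Rtg G (s \ {v}) z y := ih.1 hzv
          rcases hnbrs z hzs hadj' with h | h
          · exact ⟨h ▸ hz, Relation.ReflTransGen.trans hab.symm (h ▸ hz)⟩
          · exact ⟨Relation.ReflTransGen.trans hab (h ▸ hz), h ▸ hz⟩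
  exact (main hxy).1 hx

lemma induce_degree (t : Set V) (x : ↥t) [Fintype ↥t] [DecidableRel (G.induce t).Adj] :
    (G.induce t).degree x = (nbr G t ↑x).ncard := by
  classical
  rw [← SimpleGraph.card_neighborSet_eq_degree, Set.ncard_eq_toFinset_card']
  rw [Set.toFinset_card]
  apply Fintype.card_congr
  exact {
    toFun := fun y => ⟨↑y.1, y.1.2, y.2⟩
    invFun := fun y => ⟨⟨y.1, y.2.1⟩, by simp [SimpleGraph.neighborSet, y.2.2]⟩
    left_inv := fun y => by ext; rfl
    right_inv := fun y => by ext; rfl }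

/-- In a connected 2-regular graph on `s`, after deleting `v`, its two neighbors
`a` and `b` are still joined. (Parity/handshake argument.) -/
lemma parity_rtg {s : Set V} {v a b : V}
    (hreg : ∀ w ∈ s, (nbr G s w).ncard = 2) (hv : v ∈ s)
    (hnbr : nbr G s v = {a, b}) (hab : a ≠ b) : Rtg G (s \ {v}) a b := by
  classical
  have ha : a ∈ nbr G s v := by rw [hnbr]; exact Set.mem_insert _ _
  have hb : b ∈ nbr G s v := by rw [hnbr]; exact Set.mem_insert_iff.2 (Or.inr rfl)
  have hav : a ≠ v := fun h => G.irrefl (h ▸ ha.2)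
  have hbv : b ≠ v := fun h => G.irrefl (h ▸ hb.2)
  set t : Set V := s \ {v} with ht
  have hat : a ∈ t := ⟨ha.1, hav⟩
  have hbt : b ∈ t := ⟨hb.1, hbv⟩
  by_contra hcon
  set R : Set V := {x | x ∈ t ∧ Rtg G t a x} with hR
  have haR : a ∈ R := ⟨hat, Relation.ReflTransGen.refl⟩
  have hbR : b ∉ R := fun h => hcon h.2
  -- neighbors within t of an element of R stay in R
  have hclosed : ∀ x ∈ R, nbr G t x ⊆ R := by
    rintro x hx y ⟨hyt, hadj⟩
    exact ⟨hyt, hx.2.tail ⟨hx.1, hyt, hadj⟩⟩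
  have hnbrR : ∀ x ∈ R, nbr G R x = nbr G t x := by
    intro x hx
    apply Set.Subset.antisymm
    · rintro y ⟨hyR, hadj⟩; exact ⟨hyR.1, hadj⟩
    · rintro y hy; exact ⟨hclosed x hx hy, hy.2⟩
  -- degree computation in t
  have hnbrt : ∀ x ∈ t, nbr G t x = nbr G s x \ {v} := by
    intro x _; ext y; simp only [nbr, Set.mem_diff, Set.mem_setOf_eq, ht,
      Set.mem_singleton_iff]; tauto
  have hdegt : ∀ x ∈ t, x ≠ b → x ∈ R → (nbr G t x).ncard = if x = a then 1 else 2 := by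
    intro x hxt hxb hxR
    rw [hnbrt x hxt]
    by_cases hxa : x = a
    · subst hxa
      have hvmem : v ∈ nbr G s x := ⟨hv, ha.2.symm⟩
      rw [if_pos rfl, Set.ncard_diff_singleton_of_mem hvmem,
        hreg x hxt.1]
    · rw [if_neg hxa]
      have hnadj : v ∉ nbr G s x := by
        rintro ⟨_, hadj⟩
        have : x ∈ nbr G s v := ⟨hxt.1, hadj.symm⟩
        rw [hnbr] at this
        rcases this with h | h
        · exact hxa h
        · exact hxb h
      rw [Set.diff_singleton_eq_self hnadj, hreg x hxt.1]
  -- handshake on the induced graph on R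
  have hfin : Fintype ↥R := Fintype.ofFinite ↥R
  have hdec : DecidableRel (G.induce R).Adj := Classical.decRel _
  have heven := SimpleGraph.sum_degrees_eq_twice_card_edges (G.induce R)
  have heven' : Even (∑ x : ↥R, (G.induce R).degree x) := ⟨_, by rw [heven]; ring⟩
  have hdegR : ∀ x : ↥R, (G.induce R).degree x = if (x : V) = a then 1 else 2 := by
    intro x
    rw [induce_degree, hnbrR ↑x x.2]
    exact hdegt ↑x x.2.1 (fun h => hbR (h ▸ x.2)) x.2
  rw [Finset.sum_congr rfl (fun x _ => hdegR x)] at heven'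
  have haR' : (⟨a, haR⟩ : ↥R) ∈ Finset.univ := Finset.mem_univ _
  rw [← Finset.add_sum_erase _ _ haR'] at heven'
  have hterm : ∀ x ∈ Finset.univ.erase (⟨a, haR⟩ : ↥R),
      (if (x : V) = a then 1 else 2) = 2 := by
    intro x hx
    rw [if_neg]
    intro h
    exact (Finset.mem_erase.1 hx).1 (Subtype.ext h)
  rw [Finset.sum_congr rfl hterm, if_pos rfl] at heven'
  rw [Finset.sum_const, smul_eq_mul] at heven'
  obtain ⟨k, hk⟩ := heven'
  omega

end Machinery

section Reals

lemma nat_cube_le (k : ℕ) : k ^ 3 ≤ 3 ^ k := by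
  induction k with
  | zero => norm_num
  | succ n ih =>
      rcases Nat.lt_or_ge n 3 with h | h
      · interval_cases n <;> norm_num
      · calc (n + 1) ^ 3 ≤ 3 * n ^ 3 := by nlinarith [sq_nonneg n, h]
          _ ≤ 3 * 3 ^ n := Nat.mul_le_mul_left 3 ih
          _ = 3 ^ (n + 1) := by ring

lemma real_k_le (k : ℕ) : (k : ℝ) ≤ (3 : ℝ) ^ ((k : ℝ) / 3) := by
  have h1 : (0 : ℝ) ≤ (3 : ℝ) ^ ((k : ℝ) / 3) := Real.rpow_nonneg (by norm_num) _
  have h3 : ((k : ℝ)) ^ (3 : ℕ) ≤ ((3 : ℝ) ^ ((k : ℝ) / 3)) ^ (3 : ℕ) := by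
    rw [← Real.rpow_natCast ((3 : ℝ) ^ ((k : ℝ) / 3)) 3, ← Real.rpow_mul (by norm_num)]
    have h : (k : ℝ) / 3 * ((3 : ℕ) : ℝ) = ((k : ℕ) : ℝ) := by push_cast; ring
    rw [h, Real.rpow_natCast]
    exact_mod_cast nat_cube_le k
  exact le_of_pow_le_pow_left₀ (by norm_num) h1 h3

lemma mul_rpow_bound {m k : ℕ} (hk : k ≤ m) :
    (k : ℝ) * (3 : ℝ) ^ (((m - k : ℕ) : ℝ) / 3) ≤ (3 : ℝ) ^ ((m : ℝ) / 3) := by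
  have hc : ((m - k : ℕ) : ℝ) = (m : ℝ) - k := by
    push_cast [Nat.cast_sub hk]; ring
  rw [hc]
  calc (k : ℝ) * (3 : ℝ) ^ (((m : ℝ) - k) / 3)
      ≤ (3 : ℝ) ^ ((k : ℝ) / 3) * (3 : ℝ) ^ (((m : ℝ) - k) / 3) :=
        mul_le_mul_of_nonneg_right (real_k_le k) (Real.rpow_nonneg (by norm_num) _)
    _ = (3 : ℝ) ^ ((m : ℝ) / 3) := by
        rw [← Real.rpow_add (by norm_num)]; ring_nf

lemma one_le_rpow3 {x : ℝ} (hx : 0 ≤ x) : (1 : ℝ) ≤ (3 : ℝ) ^ x := by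
  have := Real.rpow_le_rpow_of_exponent_le (by norm_num : (1:ℝ) ≤ 3) hx
  rwa [Real.rpow_zero] at this

end Reals

section PathCount

variable {V : Type*} [Fintype V] [DecidableEq V]

/-- The vertex set of a candidate path with endpoints `a`, `b` and interior `S`. -/
def pset (S : Finset V) (a b : V) : Set V := ↑S ∪ {a, b}

/-- `S` is the interior of an induced path from `a` to `b`. -/
def IsPathSet (G : SimpleGraph V) (a b : V) (S : Finset V) : Prop :=
  a ∉ S ∧ b ∉ S ∧ a ≠ b ∧
  (∀ x ∈ pset S a b, ∀ y ∈ pset S a b, Rtg G (pset S a b) x y) ∧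
  (nbr G (pset S a b) a).ncard = 1 ∧
  (nbr G (pset S a b) b).ncard = 1 ∧
  ∀ w ∈ S, (nbr G (pset S a b) w).ncard = 2

lemma mem_pset {S : Finset V} {a b x : V} :
    x ∈ pset S a b ↔ x ∈ S ∨ x = a ∨ x = b := by
  simp [pset]; tauto

open Classical in
/-- Key recursion: the number of induced paths from `a` to `b` with interior
inside `M` is at most `3 ^ (|M|/3)`. -/
lemma path_count (G : SimpleGraph V) :
    ∀ (m : ℕ) (M : Finset V) (a b : V), M.card = m → a ∉ M → b ∉ M → a ≠ b →
    (((M.powerset.filter (fun S => IsPathSet G a b S)).card : ℝ)) ≤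
      (3 : ℝ) ^ ((m : ℝ) / 3) := by
  intro m
  induction m using Nat.strong_induction_on with
  | _ m ih =>
  intro M a b hm haM hbM hab
  by_cases hadj : G.Adj a b
  · -- if a,b adjacent, the only possible interior is ∅
    have hone : ∀ S ∈ M.powerset.filter (fun S => IsPathSet G a b S), S = (∅ : Finset V) := by
      intro S hS
      obtain ⟨haS, hbS, -, hconn, hna, hnb, -⟩ := (Finset.mem_filter.1 hS).2
      set P := pset S a b with hP
      have haP : a ∈ P := mem_pset.2 (Or.inr (Or.inl rfl))
      have hbP : b ∈ P := mem_pset.2 (Or.inr (Or.inr rfl))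
      have hbn : b ∈ nbr G P a := ⟨hbP, hadj⟩
      have han : a ∈ nbr G P b := ⟨haP, hadj.symm⟩
      obtain ⟨x, hx⟩ := Set.ncard_eq_one.1 hna
      obtain ⟨y, hy⟩ := Set.ncard_eq_one.1 hnb
      have hxb : x = b := by have := hx ▸ hbn; simpa using this.symm
      have hya : y = a := by have := hy ▸ han; simpa using this.symm
      have hnbrA : nbr G P a = {b} := by rw [hx, hxb]
      have hnbrB : nbr G P b = {a} := by rw [hy, hya]
      -- the set {a, b} is closed, so S must be empty by connectivity
      have hclosed : ∀ z ∈ ({a, b} : Set V), nbr G P z ⊆ ({a, b} : Set V) := by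
        intro z hz
        rcases hz with hz | hz
        · subst hz; rw [hnbrA]; intro w hw; exact Or.inr hw
        · rw [Set.mem_singleton_iff] at hz
          subst hz; rw [hnbrB]; intro w hw; exact Or.inl hw
      rw [Finset.eq_empty_iff_forall_notMem]
      intro w hwS
      have hwP : w ∈ P := mem_pset.2 (Or.inl hwS)
      have := closed_rtg hclosed (hconn a haP w hwP) (Or.inl rfl)
      rcases this with h | h
      · exact haS (h ▸ hwS)
      · rw [Set.mem_singleton_iff] at h; exact hbS (h ▸ hwS)
    have hcard : (M.powerset.filter (fun S => IsPathSet G a b S)).card ≤ 1 :=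
      Finset.card_le_one.2 (fun S hS T hT => (hone S hS).trans (hone T hT).symm)
    calc ((M.powerset.filter (fun S => IsPathSet G a b S)).card : ℝ) ≤ 1 := by
          exact_mod_cast hcard
      _ ≤ (3 : ℝ) ^ ((m : ℝ) / 3) := one_le_rpow3 (by positivity)
  · -- a,b not adjacent: branch over the neighbor of a on the path
    set K := M.filter (fun u => G.Adj a u) with hK
    have hKM : K ⊆ M := Finset.filter_subset _ _
    have hsub : M.powerset.filter (fun S => IsPathSet G a b S) ⊆
        K.biUnion (fun u => ((M \ K).powerset.filter
          (fun T => IsPathSet G u b T)).image (fun T => insert u T)) := by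
      intro S hS
      rw [Finset.mem_filter, Finset.mem_powerset] at hS
      obtain ⟨hSM, hS2⟩ := hS
      obtain ⟨haS, hbS, -, hconn, hna, hnb, hdeg⟩ := hS2
      set P := pset S a b with hP
      have haP : a ∈ P := mem_pset.2 (Or.inr (Or.inl rfl))
      have hbP : b ∈ P := mem_pset.2 (Or.inr (Or.inr rfl))
      obtain ⟨u, hu⟩ := Set.ncard_eq_one.1 hna
      have humem : u ∈ nbr G P a := by rw [hu]; rfl
      have huadj : G.Adj a u := humem.2
      have hub : u ≠ b := fun h => hadj (h ▸ huadj)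
      have hua : u ≠ a := fun h => G.irrefl (h ▸ huadj)
      have huS : u ∈ S := by
        rcases mem_pset.1 humem.1 with h | h | h
        · exact h
        · exact absurd h hua
        · exact absurd h hub
      have huK : u ∈ K := Finset.mem_filter.2 ⟨hSM huS, huadj⟩
      set T := S.erase u with hT
      -- the vertex set shrinks to P \ {a}
      have hps : pset T u b = P \ {a} := by
        ext z
        simp only [mem_pset, hT, Finset.mem_erase, hP, pset, Set.mem_diff,
          Set.mem_union, Finset.mem_coe, Set.mem_insert_iff, Set.mem_singleton_iff]
        constructor
        · rintro (⟨hz1, hz2⟩ | h | h)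
          · exact ⟨Or.inl hz2, fun h => haS (h ▸ hz2)⟩
          · exact ⟨Or.inl (h ▸ huS), h ▸ hua⟩
          · exact ⟨Or.inr (Or.inr h), h ▸ (Ne.symm hab)⟩
        · rintro ⟨h1 | h1, h2⟩
          · by_cases hzu : z = u
            · exact Or.inr (Or.inl hzu)
            · exact Or.inl ⟨hzu, h1⟩
          · rcases h1 with h1 | h1
            · exact absurd h1 h2
            · exact Or.inr (Or.inr h1)
      have huniq : ∀ w w', w ∈ P → G.Adj a w → w' ∈ P → G.Adj a w' → w = w' := by
        intro w w' hw hw' hw2 hw2'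
        have h1 : w ∈ nbr G P a := ⟨hw, hw'⟩
        have h2 : w' ∈ nbr G P a := ⟨hw2, hw2'⟩
        rw [hu] at h1 h2
        exact h1.trans h2.symm
      have hTfs : T ∈ (M \ K).powerset.filter (fun T => IsPathSet G u b T) := by
        rw [Finset.mem_filter, Finset.mem_powerset]
        have hTMK : T ⊆ M \ K := by
          intro w hw
          rw [Finset.mem_sdiff]
          have hwS : w ∈ S := Finset.mem_of_mem_erase hw
          refine ⟨hSM hwS, fun hwK => ?_⟩
          have hwadj : G.Adj a w := (Finset.mem_filter.1 hwK).2
          have : w ∈ nbr G P a := ⟨mem_pset.2 (Or.inl hwS), hwadj⟩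
          rw [hu] at this
          exact (Finset.mem_erase.1 hw).1 this
        refine ⟨hTMK, ?_, ?_, hub, ?_, ?_, ?_, ?_⟩
        · exact Finset.notMem_erase u S
        · exact fun h => hbS (Finset.mem_of_mem_erase h)
        · -- connectivity after deleting a
          rw [hps]
          intro x hx y hy
          exact rtg_del_unique huniq (hconn x hx.1 y hy.1) hx.2 hy.2
        · -- u now has one neighbor
          rw [hps, nbr_diff]
          have haN : a ∈ nbr G P u := ⟨haP, huadj.symm⟩
          rw [Set.ncard_diff_singleton_of_mem haN,
            hdeg u huS]
        · -- b still has one neighbor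
          rw [hps, nbr_diff]
          have haN : a ∉ nbr G P b := fun h => hadj h.2.symm
          rw [Set.diff_singleton_eq_self haN, hnb]
        · -- interior degrees unchanged
          intro w hw
          rw [hps, nbr_diff]
          have hwS : w ∈ S := Finset.mem_of_mem_erase hw
          have haN : a ∉ nbr G P w := by
            intro h
            have : w ∈ nbr G P a := ⟨mem_pset.2 (Or.inl hwS), h.2.symm⟩
            rw [hu] at this
            exact (Finset.mem_erase.1 hw).1 this
          rw [Set.diff_singleton_eq_self haN, hdeg w hwS]
      refine Finset.mem_biUnion.2 ⟨u, huK, Finset.mem_image.2 ⟨T, hTfs, ?_⟩⟩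
      exact Finset.insert_erase huS
    by_cases hKe : K = ∅
    · have : M.powerset.filter (fun S => IsPathSet G a b S) ⊆ ∅ := by
        rw [hKe] at hsub; simpa using hsub
      rw [Finset.subset_empty.1 this]
      simp only [Finset.card_empty, Nat.cast_zero]
      positivity
    · have hk1 : 1 ≤ K.card := Finset.card_pos.2 (Finset.nonempty_of_ne_empty hKe)
      have hkm : K.card ≤ M.card := Finset.card_le_card hKM
      have hMK : (M \ K).card = M.card - K.card := Finset.card_sdiff_of_subset hKM
      have hlt : (M \ K).card < m := by omega
      have hbound : ∀ u ∈ K,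
          ((((M \ K).powerset.filter (fun T => IsPathSet G u b T)).card : ℝ)) ≤
            (3 : ℝ) ^ ((((m - K.card : ℕ)) : ℝ) / 3) := by
        intro u huK
        have hub : u ≠ b := fun h => hbM (h ▸ hKM huK)
        have h1 := ih (M \ K).card hlt (M \ K) u b rfl
          (by simp [Finset.mem_sdiff, huK]) (by simp [Finset.mem_sdiff, hbM]) hub
        rwa [hMK, hm] at h1
      calc ((M.powerset.filter (fun S => IsPathSet G a b S)).card : ℝ)
          ≤ ((K.biUnion (fun u => ((M \ K).powerset.filter
              (fun T => IsPathSet G u b T)).image (fun T => insert u T))).card : ℝ) := by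
            exact_mod_cast Finset.card_le_card hsub
        _ ≤ ∑ u ∈ K, ((((M \ K).powerset.filter
              (fun T => IsPathSet G u b T)).image (fun T => insert u T)).card : ℝ) := by
            exact_mod_cast Finset.card_biUnion_le
        _ ≤ ∑ u ∈ K, ((((M \ K).powerset.filter (fun T => IsPathSet G u b T)).card : ℝ)) := by
            refine Finset.sum_le_sum fun u _ => ?_
            exact_mod_cast Finset.card_image_le
        _ ≤ ∑ _u ∈ K, (3 : ℝ) ^ ((((m - K.card : ℕ)) : ℝ) / 3) :=
            Finset.sum_le_sum hbound
        _ = (K.card : ℝ) * (3 : ℝ) ^ ((((m - K.card : ℕ)) : ℝ) / 3) := by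
            rw [Finset.sum_const]; ring
        _ ≤ (3 : ℝ) ^ ((m : ℝ) / 3) := mul_rpow_bound (by omega)

end PathCount

section Final

variable {V : Type*} [Fintype V] [DecidableEq V]

lemma IsPathSet.symm {G : SimpleGraph V} {a b : V} {S : Finset V}
    (h : IsPathSet G a b S) : IsPathSet G b a S := by
  obtain ⟨ha, hb, hab, hconn, hna, hnb, hdeg⟩ := h
  have hpp : pset S b a = pset S a b := by
    simp only [pset, Set.pair_comm]
  refine ⟨hb, ha, hab.symm, ?_, ?_, ?_, ?_⟩
  · rw [hpp]; exact hconn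
  · rw [hpp]; exact hnb
  · rw [hpp]; exact hna
  · intro w hw; rw [hpp]; exact hdeg w hw

end Final

/-- The vertex set `s` induces a cycle (of length at least 3) in `G`:
the induced subgraph is connected and 2-regular. -/
def IsInducedCycle {V : Type*} (G : SimpleGraph V) (s : Set V) : Prop :=
  s.Finite ∧ 3 ≤ s.ncard ∧ (G.induce s).Connected ∧
    ∀ v ∈ s, {w | w ∈ s ∧ G.Adj v w}.ncard = 2

/-- `f(G)`: the number of induced cycles in `G`. -/
noncomputable def numInducedCycles {V : Type*} (G : SimpleGraph V) : ℕ :=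
  {s : Set V | IsInducedCycle G s}.ncard

/-- `m(n)`: the maximum number of induced cycles in an `n`-vertex graph. -/
noncomputable def maxInducedCycles (n : ℕ) : ℕ :=
  sSup {k : ℕ | ∃ G : SimpleGraph (Fin n), numInducedCycles G = k}

/-- `f_v(G)`: the number of induced cycles of `G` containing the vertex `v`. -/
noncomputable def numInducedCyclesThrough {V : Type*} (G : SimpleGraph V) (v : V) : ℕ :=
  {s : Set V | IsInducedCycle G s ∧ v ∈ s}.ncard

/-- The degree of `v` in `G`. -/
noncomputable def vdeg {V : Type*} (G : SimpleGraph V) (v : V) : ℕ :=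
  Nat.card {w : V // G.Adj v w}

lemma vdeg_eq {V : Type*} [Fintype V] (G : SimpleGraph V) [DecidableRel G.Adj] (v : V) :
    vdeg G v = G.degree v := by
  have h0 : vdeg G v = Nat.card (G.neighborSet v) := rfl
  rw [h0, Nat.card_coe_set_eq, Set.ncard_eq_toFinset_card']
  rfl

/-- Lemma (upper bound): the number of induced cycles through a vertex `v` is at
most `C(d(v),2) · 3^{(n - d(v) - 1)/3}`. -/
theorem inducedCyclesThrough_le :
    ∀ (n : ℕ) (F : SimpleGraph (Fin n)) (v : Fin n),
      (numInducedCyclesThrough F v : ℝ) ≤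
        ((vdeg F v).choose 2 : ℝ) * (3 : ℝ) ^ (((n : ℝ) - (vdeg F v : ℝ) - 1) / 3) := by
  classical
  intro n F v
  set d := vdeg F v with hd
  have hdeg : (F.neighborFinset v).card = d := by
    rw [hd, vdeg_eq]; rfl
  set NB := F.neighborFinset v with hNB
  set M₀ : Finset (Fin n) := Finset.univ \ insert v NB with hM₀
  have hvNB : v ∉ NB := by simp [hNB]
  have hins : (insert v NB).card = d + 1 := by
    rw [Finset.card_insert_of_notMem hvNB, hdeg]
  have hd1n : d + 1 ≤ n := by
    have := Finset.card_le_univ (insert v NB)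
    simpa [hins] using this
  have hM₀card : M₀.card = n - (d + 1) := by
    rw [hM₀, Finset.card_sdiff_of_subset (Finset.subset_univ _), hins, Finset.card_univ,
      Fintype.card_fin]
  have hM₀cast : ((M₀.card : ℝ)) = (n : ℝ) - d - 1 := by
    rw [hM₀card]
    rw [Nat.cast_sub hd1n]
    push_cast; ring
  set pairs := NB.powersetCard 2 with hpairs
  have hpairscard : pairs.card = Nat.choose d 2 := by
    rw [hpairs, Finset.card_powersetCard, hdeg]
  set CycF : Finset (Finset (Fin n)) :=
    Finset.univ.filter (fun t : Finset (Fin n) => IsInducedCycle F ↑t ∧ v ∈ t) with hCycF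
  -- Step A: the number of cycles through v equals the number of cycle finsets
  have stepA : numInducedCyclesThrough F v ≤ CycF.card := by
    rw [numInducedCyclesThrough, ← Set.ncard_coe_finset]
    apply Set.ncard_le_ncard_of_injOn (fun s => (Set.toFinite s).toFinset)
    · rintro s ⟨hs1, hs2⟩
      simp only [Finset.coe_filter, Set.mem_setOf_eq, Finset.mem_univ, true_and, hCycF]
      constructor
      · rwa [Set.Finite.coe_toFinset]
      · rwa [Set.Finite.mem_toFinset]
    · intro s _ t _ h
      have := congrArg (fun u : Finset (Fin n) => (↑u : Set (Fin n))) h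
      simpa [Set.Finite.coe_toFinset] using this
  -- the inner family for a pair P
  set Img : Finset (Fin n) → Finset (Finset (Fin n)) := fun P =>
    ((M₀.powerset).filter (fun S => ∃ x y, ({x, y} : Finset (Fin n)) = P ∧
      IsPathSet F x y S)).image (fun S => S ∪ P ∪ {v}) with hImg
  -- Step B: decomposition of cycles by the pair of neighbors of v
  have stepB : CycF ⊆ pairs.biUnion Img := by
    intro t ht
    rw [hCycF, Finset.mem_filter] at ht
    obtain ⟨-, ⟨-, -, hconn, hreg⟩, hvt⟩ := ht
    have hvt' : v ∈ (↑t : Set (Fin n)) := hvt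
    have hreg' : ∀ w ∈ (↑t : Set (Fin n)), (nbr F ↑t w).ncard = 2 := hreg
    obtain ⟨a, b, hab, hnbr⟩ := Set.ncard_eq_two.1 (hreg' v hvt')
    have hnbr' : nbr F ↑t v = {a, b} := hnbr
    have haN : a ∈ nbr F ↑t v := by rw [hnbr']; exact Or.inl rfl
    have hbN : b ∈ nbr F ↑t v := by rw [hnbr']; exact Or.inr rfl
    have hat : a ∈ t := haN.1
    have hbt : b ∈ t := hbN.1
    have hva : F.Adj v a := haN.2
    have hvb : F.Adj v b := hbN.2
    have hav : a ≠ v := fun h => F.irrefl (h ▸ hva)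
    have hbv : b ≠ v := fun h => F.irrefl (h ▸ hvb)
    set P : Finset (Fin n) := {a, b} with hP
    have hPpairs : P ∈ pairs := by
      rw [hpairs, Finset.mem_powersetCard]
      constructor
      · intro x hx
        rw [hP, Finset.mem_insert, Finset.mem_singleton] at hx
        rcases hx with h | h
        · subst h; exact (F.mem_neighborFinset v x).2 hva
        · subst h; exact (F.mem_neighborFinset v x).2 hvb
      · rw [hP, Finset.card_insert_of_notMem (by simpa using hab),
          Finset.card_singleton]
    set S : Finset (Fin n) := t \ {v, a, b} with hS
    have hSsub : ∀ w ∈ S, w ∈ t ∧ w ≠ v ∧ w ≠ a ∧ w ≠ b := by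
      intro w hw
      rw [hS, Finset.mem_sdiff, Finset.mem_insert, Finset.mem_insert,
        Finset.mem_singleton] at hw
      exact ⟨hw.1, fun h => hw.2 (Or.inl h), fun h => hw.2 (Or.inr (Or.inl h)),
        fun h => hw.2 (Or.inr (Or.inr h))⟩
    have hnadj : ∀ w ∈ S, ¬F.Adj v w := by
      intro w hw hadj
      obtain ⟨hwt, -, hwa, hwb⟩ := hSsub w hw
      have : w ∈ nbr F ↑t v := ⟨hwt, hadj⟩
      rw [hnbr'] at this
      rcases this with h | h
      · exact hwa h
      · exact hwb h
    have hSM₀ : S ⊆ M₀ := by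
      intro w hw
      obtain ⟨hwt, hwv, -, -⟩ := hSsub w hw
      rw [hM₀, Finset.mem_sdiff]
      refine ⟨Finset.mem_univ _, fun hmem => ?_⟩
      rw [Finset.mem_insert] at hmem
      rcases hmem with h | h
      · exact hwv h
      · exact hnadj w hw ((F.mem_neighborFinset v w).1 h)
    -- pset S a b is t minus v
    have hpseq : pset S a b = (↑t : Set (Fin n)) \ {v} := by
      ext z
      simp only [mem_pset, Set.mem_diff, Set.mem_singleton_iff, Finset.mem_coe]
      constructor
      · rintro (h | h | h)
        · obtain ⟨hzt, hzv, -, -⟩ := hSsub z h; exact ⟨hzt, hzv⟩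
        · exact ⟨h ▸ hat, h ▸ hav⟩
        · exact ⟨h ▸ hbt, h ▸ hbv⟩
      · rintro ⟨hzt, hzv⟩
        by_cases hza : z = a
        · exact Or.inr (Or.inl hza)
        by_cases hzb : z = b
        · exact Or.inr (Or.inr hzb)
        · refine Or.inl ?_
          rw [hS, Finset.mem_sdiff]
          refine ⟨hzt, fun hmem => ?_⟩
          rw [Finset.mem_insert, Finset.mem_insert, Finset.mem_singleton] at hmem
          rcases hmem with h | h | h
          · exact hzv h
          · exact hza h
          · exact hzb h
    have hcontr := conn_to_rtg hconn
    have hparity : Rtg F ((↑t : Set (Fin n)) \ {v}) a b :=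
      parity_rtg hreg' hvt' hnbr' hab
    have hnbrs2 : ∀ w, w ∈ (↑t : Set (Fin n)) → F.Adj v w → w = a ∨ w = b := by
      intro w hw hadj
      have : w ∈ nbr F ↑t v := ⟨hw, hadj⟩
      rw [hnbr'] at this
      exact this
    have hps : IsPathSet F a b S := by
      refine ⟨?_, ?_, hab, ?_, ?_, ?_, ?_⟩
      · intro h; exact (hSsub a h).2.2.1 rfl
      · intro h; exact (hSsub b h).2.2.2 rfl
      · rw [hpseq]
        rintro x ⟨hxt, hxv⟩ y ⟨hyt, hyv⟩
        exact rtg_del_two hnbrs2 hparity (hcontr x hxt y hyt) hxv hyv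
      · rw [hpseq, nbr_diff]
        have hv' : v ∈ nbr F ↑t a := ⟨hvt', hva.symm⟩
        rw [Set.ncard_diff_singleton_of_mem hv', hreg' a hat]
      · rw [hpseq, nbr_diff]
        have hv' : v ∈ nbr F ↑t b := ⟨hvt', hvb.symm⟩
        rw [Set.ncard_diff_singleton_of_mem hv', hreg' b hbt]
      · intro w hw
        rw [hpseq, nbr_diff]
        have hv' : v ∉ nbr F ↑t w := fun h => hnadj w hw h.2.symm
        rw [Set.diff_singleton_eq_self hv', hreg' w (hSsub w hw).1]
    refine Finset.mem_biUnion.2 ⟨P, hPpairs, ?_⟩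
    rw [hImg]
    refine Finset.mem_image.2 ⟨S, ?_, ?_⟩
    · rw [Finset.mem_filter, Finset.mem_powerset]
      exact ⟨hSM₀, a, b, rfl, hps⟩
    · -- S ∪ P ∪ {v} = t
      ext z
      simp only [Finset.mem_union, Finset.mem_singleton, hP, Finset.mem_insert]
      constructor
      · rintro ((h | h | h) | h)
        · exact (hSsub z h).1
        · exact h ▸ hat
        · exact h ▸ hbt
        · exact h ▸ hvt
      · intro hzt
        by_cases hzv : z = v
        · exact Or.inr hzv
        by_cases hza : z = a
        · exact Or.inl (Or.inr (Or.inl hza))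
        by_cases hzb : z = b
        · exact Or.inl (Or.inr (Or.inr hzb))
        · refine Or.inl (Or.inl ?_)
          rw [hS, Finset.mem_sdiff]
          refine ⟨hzt, fun hmem => ?_⟩
          rw [Finset.mem_insert, Finset.mem_insert, Finset.mem_singleton] at hmem
          tauto
  -- Step C: per-pair bound
  have stepC : ∀ P ∈ pairs, ((Img P).card : ℝ) ≤ (3 : ℝ) ^ (((M₀.card : ℝ)) / 3) := by
    intro P hPp
    rw [hpairs, Finset.mem_powersetCard] at hPp
    obtain ⟨hPNB, hP2⟩ := hPp
    obtain ⟨a, b, hab, hPab⟩ := Finset.card_eq_two.1 hP2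
    have haNB : a ∈ NB := hPNB (hPab ▸ Finset.mem_insert_self a {b})
    have hbNB : b ∈ NB := hPNB (hPab ▸ Finset.mem_insert_of_mem (Finset.mem_singleton_self b))
    have haM₀ : a ∉ M₀ := by
      rw [hM₀, Finset.mem_sdiff]
      exact fun h => h.2 (Finset.mem_insert_of_mem haNB)
    have hbM₀ : b ∉ M₀ := by
      rw [hM₀, Finset.mem_sdiff]
      exact fun h => h.2 (Finset.mem_insert_of_mem hbNB)
    have hsub2 : (M₀.powerset).filter (fun S => ∃ x y, ({x, y} : Finset (Fin n)) = P ∧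
        IsPathSet F x y S) ⊆ (M₀.powerset).filter (fun S => IsPathSet F a b S) := by
      intro S hS
      rw [Finset.mem_filter] at hS ⊢
      obtain ⟨hSM, x, y, hxy, hps⟩ := hS
      refine ⟨hSM, ?_⟩
      rw [hPab] at hxy
      have hxmem : x ∈ ({a, b} : Finset (Fin n)) := hxy ▸ Finset.mem_insert_self x {y}
      have hymem : y ∈ ({a, b} : Finset (Fin n)) :=
        hxy ▸ Finset.mem_insert_of_mem (Finset.mem_singleton_self y)
      rw [Finset.mem_insert, Finset.mem_singleton] at hxmem hymem
      have hxyne : x ≠ y := hps.2.2.1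
      rcases hxmem with hx | hx <;> rcases hymem with hy | hy
      · exact absurd (hx.trans hy.symm) hxyne
      · rw [hx, hy] at hps; exact hps
      · rw [hx, hy] at hps; exact hps.symm
      · exact absurd (hx.trans hy.symm) hxyne
    calc ((Img P).card : ℝ)
        ≤ (((M₀.powerset).filter (fun S => ∃ x y, ({x, y} : Finset (Fin n)) = P ∧
            IsPathSet F x y S)).card : ℝ) := by
          rw [hImg]; exact_mod_cast Finset.card_image_le
      _ ≤ (((M₀.powerset).filter (fun S => IsPathSet F a b S)).card : ℝ) := by
          exact_mod_cast Finset.card_le_card hsub2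
      _ ≤ (3 : ℝ) ^ (((M₀.card : ℝ)) / 3) :=
          path_count F M₀.card M₀ a b rfl haM₀ hbM₀ hab
  -- put everything together
  calc (numInducedCyclesThrough F v : ℝ)
      ≤ (CycF.card : ℝ) := by exact_mod_cast stepA
    _ ≤ ((pairs.biUnion Img).card : ℝ) := by exact_mod_cast Finset.card_le_card stepB
    _ ≤ ∑ P ∈ pairs, ((Img P).card : ℝ) := by exact_mod_cast Finset.card_biUnion_le
    _ ≤ ∑ _P ∈ pairs, (3 : ℝ) ^ (((M₀.card : ℝ)) / 3) := Finset.sum_le_sum stepC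
    _ = (pairs.card : ℝ) * (3 : ℝ) ^ (((M₀.card : ℝ)) / 3) := by
        rw [Finset.sum_const]; ring
    _ = ((Nat.choose d 2 : ℕ) : ℝ) * (3 : ℝ) ^ (((n : ℝ) - d - 1) / 3) := by
        rw [hpairscard, hM₀cast]
    _ = ((vdeg F v).choose 2 : ℝ) * (3 : ℝ) ^ (((n : ℝ) - (vdeg F v : ℝ) - 1) / 3) := by
        rw [hd]

end ExtremalInducedCycles
end

section
/- Fix 0 < c ≤ 1. There exists n₀ such that for all n ≥ n₀, every graph F on n vertices with f(F) ≥ c·m(n) contains a vertex v such that f_v(F) ≥ (c/10)·m(n). -/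
namespace ExtremalInducedCycles

section Aux
set_option linter.unusedSectionVars false

variable {V : Type*} [Fintype V] [DecidableEq V]

/-- the neighbours of `v` inside the finset `t`. -/
noncomputable def nbrs (G : SimpleGraph V) (t : Finset V) (v : V) : Finset V :=
  @Finset.filter _ (fun w => G.Adj v w) (Classical.decPred _) t

lemma mem_nbrs {G : SimpleGraph V} {t : Finset V} {v w : V} :
    w ∈ nbrs G t v ↔ w ∈ t ∧ G.Adj v w := by
  simp [nbrs]

lemma nbrs_ncard (G : SimpleGraph V) (t : Finset V) (v : V) :
    {w | w ∈ (↑t : Set V) ∧ G.Adj v w}.ncard = (nbrs G t v).card := by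
  rw [show {w | w ∈ (↑t : Set V) ∧ G.Adj v w} = ↑(nbrs G t v) by
    ext w; simp [mem_nbrs]]
  exact Set.ncard_coe_finset _

/-- the finset of induced cycles of `G`. -/
noncomputable def cycFinset (G : SimpleGraph V) : Finset (Finset V) :=
  @Finset.filter _ (fun t => IsInducedCycle G (↑t : Set V)) (Classical.decPred _) Finset.univ

lemma mem_cycFinset {G : SimpleGraph V} {t : Finset V} :
    t ∈ cycFinset G ↔ IsInducedCycle G (↑t : Set V) := by
  simp [cycFinset]

lemma numInducedCycles_eq (G : SimpleGraph V) :
    numInducedCycles G = (cycFinset G).card := by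
  have h : {s : Set V | IsInducedCycle G s}
      = (fun (t : Finset V) => (↑t : Set V)) '' {t : Finset V | IsInducedCycle G ↑t} := by
    ext s
    constructor
    · intro hs
      exact ⟨hs.1.toFinset, by simpa [Set.Finite.coe_toFinset] using hs,
        Set.Finite.coe_toFinset hs.1⟩
    · rintro ⟨t, ht, rfl⟩
      exact ht
  rw [numInducedCycles, h, Set.ncard_image_of_injective _ Finset.coe_injective]
  rw [show {t : Finset V | IsInducedCycle G ↑t} = ↑(cycFinset G) by
    ext t; simp [mem_cycFinset]]
  exact Set.ncard_coe_finset _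

lemma numInducedCyclesThrough_eq (G : SimpleGraph V) (v : V) :
    numInducedCyclesThrough G v
      = ((cycFinset G).filter (fun t => v ∈ t)).card := by
  classical
  have h : {s : Set V | IsInducedCycle G s ∧ v ∈ s}
      = (fun (t : Finset V) => (↑t : Set V)) ''
          {t : Finset V | IsInducedCycle G ↑t ∧ v ∈ t} := by
    ext s
    constructor
    · intro hs
      exact ⟨hs.1.1.toFinset, by simpa [Set.Finite.coe_toFinset] using hs,
        Set.Finite.coe_toFinset hs.1.1⟩
    · rintro ⟨t, ht, rfl⟩
      simpa using ht
  rw [numInducedCyclesThrough, h, Set.ncard_image_of_injective _ Finset.coe_injective]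
  rw [show {t : Finset V | IsInducedCycle G ↑t ∧ v ∈ t}
      = ↑((cycFinset G).filter (fun t => v ∈ t)) by
    ext t; simp [mem_cycFinset]]
  exact Set.ncard_coe_finset _

end Aux


section Walks

variable {V : Type*}

lemma reachable_induce_of_walk {G : SimpleGraph V} {s : Set V} :
    ∀ {u v : V} (p : G.Walk u v), (∀ x ∈ p.support, x ∈ s) →
    ∀ (hu : u ∈ s) (hv : v ∈ s), (G.induce s).Reachable ⟨u, hu⟩ ⟨v, hv⟩ := by
  intro u v p
  induction p with
  | nil => intro _ hu hv; rfl
  | @cons u w v h q ih =>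
    intro hp hu hv
    have hw : w ∈ s := hp w (by simp [SimpleGraph.Walk.support_cons])
    have hadj : (G.induce s).Adj ⟨u, hu⟩ ⟨w, hw⟩ := by
      simpa using h
    exact hadj.reachable.trans
      (ih (fun x hx => hp x (by simp [SimpleGraph.Walk.support_cons, hx])) hw hv)

lemma exists_walk_of_reachable_induce {G : SimpleGraph V} {s : Set V} {u v : ↥s}
    (h : (G.induce s).Reachable u v) :
    ∃ p : G.Walk ↑u ↑v, ∀ x ∈ p.support, x ∈ s := by
  obtain ⟨q⟩ := h
  refine ⟨q.map (SimpleGraph.Embedding.induce s).toHom, ?_⟩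
  intro x hx
  replace hx : x ∈ (q.map (SimpleGraph.Embedding.induce s).toHom).support := hx
  rw [SimpleGraph.Walk.support_map] at hx
  obtain ⟨y, _, rfl⟩ := List.mem_map.mp hx
  exact y.2

lemma walk_support_closed {G : SimpleGraph V} {t A : Set V}
    (hA : ∀ a ∈ A, ∀ w ∈ t, G.Adj a w → w ∈ A) :
    ∀ {u v : V} (p : G.Walk u v), (∀ x ∈ p.support, x ∈ t) → u ∈ A →
      ∀ x ∈ p.support, x ∈ A := by
  intro u v p
  induction p with
  | nil =>
    intro _ hu x hx
    simp only [SimpleGraph.Walk.support_nil, List.mem_singleton] at hx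
    exact hx ▸ hu
  | @cons u w v h q ih =>
    intro hsup hu x hx
    have hw : w ∈ A := hA u hu w (hsup w (by simp [SimpleGraph.Walk.support_cons])) h
    rw [SimpleGraph.Walk.support_cons, List.mem_cons] at hx
    rcases hx with rfl | hx
    · exact hu
    · exact ih (fun y hy => hsup y (by simp [SimpleGraph.Walk.support_cons, hy])) hw x hx

lemma walk_surgery {G G' : SimpleGraph V} {x z b : V}
    (hle : ∀ ⦃a c⦄, G.Adj a c → G'.Adj a c) (hzb : G'.Adj z b) {t : Set V}
    (hnb : ∀ u ∈ t, G.Adj x u → u = z ∨ u = b) :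
    ∀ (N : ℕ) {u w : V} (p : G.Walk u w), p.length ≤ N →
      (∀ y ∈ p.support, y ∈ t) → u ≠ x → w ≠ x →
      ∃ q : G'.Walk u w, ∀ y ∈ q.support, y ∈ t ∧ y ≠ x := by
  intro N
  induction N with
  | zero =>
    intro u w p hlen hsup hu hw
    cases p with
    | nil => exact ⟨SimpleGraph.Walk.nil, by
        intro y hy
        simp only [SimpleGraph.Walk.support_nil, List.mem_singleton] at hy
        exact hy ▸ ⟨hsup u (by simp), hu⟩⟩
    | cons h q => simp at hlen
  | succ N ih =>
    intro u w p hlen hsup hu hw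
    cases p with
    | nil => exact ⟨SimpleGraph.Walk.nil, by
        intro y hy
        simp only [SimpleGraph.Walk.support_nil, List.mem_singleton] at hy
        exact hy ▸ ⟨hsup u (by simp), hu⟩⟩
    | @cons _ v _ h p' =>
      by_cases hv : v = x
      · subst hv
        -- next vertex is x; look one more step ahead
        cases p' with
        | nil => exact absurd rfl hw
        | @cons _ v₂ _ h2 p'' =>
          have hv₂x : v₂ ≠ v := fun hh => G.irrefl (hh ▸ h2)
          have husupp : u ∈ t := hsup u (by simp)
          have hv₂supp : v₂ ∈ t := hsup v₂ (by simp [SimpleGraph.Walk.support_cons])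
          have hu_zb : u = z ∨ u = b := hnb u husupp h.symm
          have hv₂_zb : v₂ = z ∨ v₂ = b := hnb v₂ hv₂supp h2
          have hlen'' : p''.length ≤ N := by
            simp only [SimpleGraph.Walk.length_cons] at hlen; omega
          have hsup'' : ∀ y ∈ p''.support, y ∈ t := fun y hy =>
            hsup y (by simp [SimpleGraph.Walk.support_cons, hy])
          by_cases huv : u = v₂
          · subst huv
            exact ih p'' hlen'' hsup'' hu hw
          · have hadj : G'.Adj u v₂ := by
              rcases hu_zb with rfl | rfl <;> rcases hv₂_zb with rfl | rfl
              · exact absurd rfl huv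
              · exact hzb
              · exact hzb.symm
              · exact absurd rfl huv
            obtain ⟨q, hq⟩ := ih p'' hlen'' hsup'' hv₂x hw
            refine ⟨SimpleGraph.Walk.cons hadj q, ?_⟩
            intro y hy
            rw [SimpleGraph.Walk.support_cons, List.mem_cons] at hy
            rcases hy with rfl | hy
            · exact ⟨husupp, hu⟩
            · exact hq y hy
      · have hlen' : p'.length ≤ N := by
          simp only [SimpleGraph.Walk.length_cons] at hlen; omega
        obtain ⟨q, hq⟩ := ih p' hlen'
          (fun y hy => hsup y (by simp [SimpleGraph.Walk.support_cons, hy])) hv hw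
        refine ⟨SimpleGraph.Walk.cons (hle h) q, ?_⟩
        intro y hy
        rw [SimpleGraph.Walk.support_cons, List.mem_cons] at hy
        rcases hy with rfl | hy
        · exact ⟨hsup y (by simp), hu⟩
        · exact hq y hy

end Walks

section Rho

noncomputable def rho : ℝ := (3 : ℝ) ^ ((1 : ℝ)/3)

lemma rho_pos : 0 < rho := Real.rpow_pos_of_pos (by norm_num) _

lemma rho_cube : rho ^ (3 : ℕ) = 3 := by
  rw [rho, ← Real.rpow_natCast ((3:ℝ) ^ ((1:ℝ)/3)) 3, ← Real.rpow_mul (by norm_num : (0:ℝ) ≤ 3)]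
  norm_num

lemma one_lt_rho : 1 < rho := by
  rw [rho]
  apply Real.one_lt_rpow_iff_of_pos (by norm_num) |>.mpr
  norm_num

lemma one_le_rho : 1 ≤ rho := one_lt_rho.le

lemma fourthird_le_rho : (4:ℝ)/3 ≤ rho := by
  have h : ((4:ℝ)/3) ^ (3:ℕ) ≤ rho ^ (3:ℕ) := by
    rw [rho_cube]; norm_num
  exact le_of_pow_le_pow_left₀ (by norm_num) rho_pos.le h

lemma nat_cube_le_three_pow : ∀ d : ℕ, d ^ 3 ≤ 3 ^ d := by
  intro d
  induction d with
  | zero => norm_num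
  | succ d ih =>
    rcases Nat.lt_or_ge d 3 with h | h
    · interval_cases d <;> norm_num
    · have e1 : 3*d^2 ≤ d^3 := by
        calc 3*d^2 ≤ d*d^2 := Nat.mul_le_mul_right _ h
          _ = d^3 := by ring
      have e2 : 3*d+1 ≤ d^3 := by
        have h9 : 9*d ≤ d^3 := by
          calc 9*d = 3*(3*d) := by ring
            _ ≤ d*(d*d) := Nat.mul_le_mul h (Nat.mul_le_mul h le_rfl)
            _ = d^3 := by ring
        omega
      have e0 : (d+1)^3 = d^3 + 3*d^2 + (3*d+1) := by ring
      have h1 : (d+1)^3 ≤ 3 * d^3 := by omega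
      calc (d+1)^3 ≤ 3 * d^3 := h1
        _ ≤ 3 * 3^d := by omega
        _ = 3^(d+1) := by ring

lemma nat_le_rho_pow (d : ℕ) : (d : ℝ) ≤ rho ^ d := by
  have h3 : ((d:ℝ)) ^ (3:ℕ) ≤ (rho ^ d) ^ (3:ℕ) := by
    rw [← pow_mul, mul_comm, pow_mul, rho_cube]
    calc ((d:ℝ))^(3:ℕ) = ((d^3 : ℕ) : ℝ) := by push_cast; ring
      _ ≤ ((3^d : ℕ) : ℝ) := by exact_mod_cast nat_cube_le_three_pow d
      _ = (3:ℝ)^d := by push_cast; ring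
  exact le_of_pow_le_pow_left₀ (by norm_num) (pow_nonneg rho_pos.le _) h3

lemma one_le_rho_pow (k : ℕ) : 1 ≤ rho ^ k := by
  induction k with
  | zero => norm_num
  | succ k ih => rw [pow_succ]; nlinarith [one_le_rho]

end Rho

section Struct
set_option linter.unusedSectionVars false
variable {V : Type*} [Fintype V] [DecidableEq V]

lemma adj_sup_edge {G : SimpleGraph V} {z b : V} (hzb : z ≠ b) {a c : V} :
    (G ⊔ SimpleGraph.fromEdgeSet {s(z,b)}).Adj a c ↔
      (G.Adj a c ∨ ((a = z ∧ c = b) ∨ (a = b ∧ c = z))) := by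
  simp only [SimpleGraph.sup_adj, SimpleGraph.fromEdgeSet_adj, Set.mem_singleton_iff,
    Sym2.eq_iff]
  constructor
  · rintro (h | ⟨(⟨rfl, rfl⟩ | ⟨rfl, rfl⟩), _⟩)
    · exact Or.inl h
    · exact Or.inr (Or.inl ⟨rfl, rfl⟩)
    · exact Or.inr (Or.inr ⟨rfl, rfl⟩)
  · rintro (h | (⟨rfl, rfl⟩ | ⟨rfl, rfl⟩))
    · exact Or.inl h
    · exact Or.inr ⟨Or.inl ⟨rfl, rfl⟩, hzb⟩
    · exact Or.inr ⟨Or.inr ⟨rfl, rfl⟩, hzb.symm⟩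

lemma cyc_deg {G : SimpleGraph V} {t : Finset V} (h : IsInducedCycle G ↑t) {v : V}
    (hv : v ∈ t) : (nbrs G t v).card = 2 := by
  have h2 := h.2.2.2 v (Finset.mem_coe.mpr hv)
  rwa [nbrs_ncard] at h2

lemma no_chord {G : SimpleGraph V} {t : Finset V} {x z b : V}
    (hcyc : IsInducedCycle G ↑t) (hx : x ∈ t)
    (hnb : nbrs G t x = {z, b}) (hzb : z ≠ b) (hcard : 4 ≤ t.card) :
    ¬ G.Adj z b := by
  intro hadj
  have hzmem : z ∈ nbrs G t x := by rw [hnb]; simp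
  have hbmem : b ∈ nbrs G t x := by rw [hnb]; simp
  obtain ⟨hzt, hxz⟩ := mem_nbrs.mp hzmem
  obtain ⟨hbt, hxb⟩ := mem_nbrs.mp hbmem
  have hxbne : x ≠ b := fun e => G.irrefl (e ▸ hxb)
  have hxzne : x ≠ z := fun e => G.irrefl (e ▸ hxz)
  have hnbz : nbrs G t z = {x, b} := by
    refine (Finset.eq_of_subset_of_card_le ?_ ?_).symm
    · intro w hw
      rcases Finset.mem_insert.mp hw with rfl | hw
      · exact mem_nbrs.mpr ⟨hx, hxz.symm⟩
      · rw [Finset.mem_singleton] at hw; subst hw; exact mem_nbrs.mpr ⟨hbt, hadj⟩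
    · rw [cyc_deg hcyc hzt, Finset.card_insert_of_notMem (by simp [hxbne]),
        Finset.card_singleton]
  have hnbb : nbrs G t b = {x, z} := by
    refine (Finset.eq_of_subset_of_card_le ?_ ?_).symm
    · intro w hw
      rcases Finset.mem_insert.mp hw with rfl | hw
      · exact mem_nbrs.mpr ⟨hx, hxb.symm⟩
      · rw [Finset.mem_singleton] at hw; subst hw; exact mem_nbrs.mpr ⟨hzt, hadj.symm⟩
    · rw [cyc_deg hcyc hbt, Finset.card_insert_of_notMem (by simp [hxzne]),
        Finset.card_singleton]
  have hclosed : ∀ a ∈ ({x, z, b} : Set V), ∀ w ∈ (↑t : Set V), G.Adj a w →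
      w ∈ ({x, z, b} : Set V) := by
    intro a ha w hwt haw
    simp only [Set.mem_insert_iff, Set.mem_singleton_iff] at ha ⊢
    rcases ha with rfl | rfl | rfl
    · have hw : w ∈ nbrs G t a := mem_nbrs.mpr ⟨Finset.mem_coe.mp hwt, haw⟩
      rw [hnb] at hw
      rcases Finset.mem_insert.mp hw with rfl | hw
      · exact Or.inr (Or.inl rfl)
      · exact Or.inr (Or.inr (Finset.mem_singleton.mp hw))
    · have hw : w ∈ nbrs G t a := mem_nbrs.mpr ⟨Finset.mem_coe.mp hwt, haw⟩
      rw [hnbz] at hw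
      rcases Finset.mem_insert.mp hw with rfl | hw
      · exact Or.inl rfl
      · exact Or.inr (Or.inr (Finset.mem_singleton.mp hw))
    · have hw : w ∈ nbrs G t a := mem_nbrs.mpr ⟨Finset.mem_coe.mp hwt, haw⟩
      rw [hnbb] at hw
      rcases Finset.mem_insert.mp hw with rfl | hw
      · exact Or.inl rfl
      · exact Or.inr (Or.inl (Finset.mem_singleton.mp hw))
  have hbig : ∃ u₀ ∈ t, u₀ ∉ ({x, z, b} : Finset V) := by
    by_contra hcon
    push_neg at hcon
    have hsub : t ⊆ ({x, z, b} : Finset V) := fun u hu => hcon u hu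
    have h3 : ({x, z, b} : Finset V).card ≤ 3 := by
      refine le_trans (Finset.card_insert_le _ _) ?_
      have := Finset.card_insert_le z ({b} : Finset V)
      simp only [Finset.card_singleton] at this ⊢
      omega
    have := Finset.card_le_card hsub
    omega
  obtain ⟨u₀, hu₀t, hu₀A⟩ := hbig
  have hreach := hcyc.2.2.1.preconnected ⟨x, Finset.mem_coe.mpr hx⟩
    ⟨u₀, Finset.mem_coe.mpr hu₀t⟩
  obtain ⟨p, hp⟩ := exists_walk_of_reachable_induce hreach
  have hfin := walk_support_closed hclosed p hp (Or.inl rfl) u₀ p.end_mem_support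
  apply hu₀A
  simp only [Set.mem_insert_iff, Set.mem_singleton_iff] at hfin
  simp only [Finset.mem_insert, Finset.mem_singleton]
  exact hfin

lemma cycle_erase {G : SimpleGraph V} {t : Finset V} {x z b : V}
    (hcyc : IsInducedCycle G ↑t) (hx : x ∈ t)
    (hnb : nbrs G t x = {z, b}) (hzb : z ≠ b) (hcard : 4 ≤ t.card) :
    IsInducedCycle (G ⊔ SimpleGraph.fromEdgeSet {s(z,b)}) ↑(t.erase x) := by
  have hzmem : z ∈ nbrs G t x := by rw [hnb]; simp
  have hbmem : b ∈ nbrs G t x := by rw [hnb]; simp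
  obtain ⟨hzt, hxz⟩ := mem_nbrs.mp hzmem
  obtain ⟨hbt, hxb⟩ := mem_nbrs.mp hbmem
  have hzx : z ≠ x := fun e => G.irrefl (e ▸ hxz)
  have hbx : b ≠ x := fun e => G.irrefl (e ▸ hxb)
  have hchord : ¬ G.Adj z b := no_chord hcyc hx hnb hzb hcard
  set G' := G ⊔ SimpleGraph.fromEdgeSet {s(z,b)} with hG'
  have hzb' : G'.Adj z b := by rw [hG', adj_sup_edge hzb]; exact Or.inr (Or.inl ⟨rfl, rfl⟩)
  have hnbset : ∀ y ∈ (↑t : Set V), G.Adj x y → y = z ∨ y = b := by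
    intro y hyt hxy
    have : y ∈ nbrs G t x := mem_nbrs.mpr ⟨Finset.mem_coe.mp hyt, hxy⟩
    rw [hnb] at this
    rcases Finset.mem_insert.mp this with rfl | h
    · exact Or.inl rfl
    · exact Or.inr (Finset.mem_singleton.mp h)
  refine ⟨(t.erase x).finite_toSet, ?_, ?_, ?_⟩
  · rw [Set.ncard_coe_finset, Finset.card_erase_of_mem hx]; omega
  · -- connectivity
    have hne : Nonempty ((↑(t.erase x) : Set V)) :=
      ⟨⟨z, Finset.mem_coe.mpr (Finset.mem_erase.mpr ⟨hzx, hzt⟩)⟩⟩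
    rw [SimpleGraph.connected_iff]
    refine ⟨?_, hne⟩
    rintro ⟨u, hu⟩ ⟨w, hw⟩
    have hu' := Finset.mem_erase.mp (Finset.mem_coe.mp hu)
    have hw' := Finset.mem_erase.mp (Finset.mem_coe.mp hw)
    have hreach := hcyc.2.2.1.preconnected ⟨u, Finset.mem_coe.mpr hu'.2⟩
      ⟨w, Finset.mem_coe.mpr hw'.2⟩
    obtain ⟨p, hp⟩ := exists_walk_of_reachable_induce hreach
    obtain ⟨q, hq⟩ := walk_surgery (fun a c h => (SimpleGraph.sup_adj _ _ _ _).mpr (Or.inl h))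
      hzb' hnbset p.length p le_rfl hp hu'.1 hw'.1
    exact reachable_induce_of_walk q
      (fun y hy => Finset.mem_coe.mpr (Finset.mem_erase.mpr ⟨(hq y hy).2,
        Finset.mem_coe.mp (hq y hy).1⟩)) _ _
  · -- degrees
    intro v hv
    have hv' := Finset.mem_erase.mp (Finset.mem_coe.mp hv)
    obtain ⟨hvx, hvt⟩ := hv'
    rw [nbrs_ncard]
    by_cases hvz : v = z
    · subst hvz
      have hxz' : x ∈ nbrs G t v := mem_nbrs.mpr ⟨hx, hxz.symm⟩
      have hbnot : b ∉ (nbrs G t v).erase x := by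
        simp only [Finset.mem_erase, mem_nbrs]
        rintro ⟨-, -, h⟩
        exact hchord h
      have heq : nbrs G' (t.erase x) v = insert b ((nbrs G t v).erase x) := by
        ext w
        simp only [mem_nbrs, Finset.mem_insert, Finset.mem_erase]
        rw [hG', adj_sup_edge hzb]
        constructor
        · rintro ⟨⟨hwx, hwt⟩, (h | ⟨-, rfl⟩ | ⟨hbad, -⟩)⟩
          · exact Or.inr ⟨hwx, hwt, h⟩
          · exact Or.inl rfl
          · exact absurd hbad hzb
        · rintro (rfl | ⟨hwx, hwt, h⟩)
          · exact ⟨⟨hbx, hbt⟩, Or.inr (Or.inl ⟨rfl, rfl⟩)⟩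
          · exact ⟨⟨hwx, hwt⟩, Or.inl h⟩
      rw [heq, Finset.card_insert_of_notMem hbnot, Finset.card_erase_of_mem hxz',
        cyc_deg hcyc hvt]
    · by_cases hvb : v = b
      · subst hvb
        have hxb' : x ∈ nbrs G t v := mem_nbrs.mpr ⟨hx, hxb.symm⟩
        have hznot : z ∉ (nbrs G t v).erase x := by
          simp only [Finset.mem_erase, mem_nbrs]
          rintro ⟨-, -, h⟩
          exact hchord h.symm
        have heq : nbrs G' (t.erase x) v = insert z ((nbrs G t v).erase x) := by
          ext w
          simp only [mem_nbrs, Finset.mem_insert, Finset.mem_erase]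
          rw [hG', adj_sup_edge hzb]
          constructor
          · rintro ⟨⟨hwx, hwt⟩, (h | ⟨hbad, -⟩ | ⟨-, rfl⟩)⟩
            · exact Or.inr ⟨hwx, hwt, h⟩
            · exact absurd hbad.symm hzb
            · exact Or.inl rfl
          · rintro (rfl | ⟨hwx, hwt, h⟩)
            · exact ⟨⟨hzx, hzt⟩, Or.inr (Or.inr ⟨rfl, rfl⟩)⟩
            · exact ⟨⟨hwx, hwt⟩, Or.inl h⟩
        rw [heq, Finset.card_insert_of_notMem hznot, Finset.card_erase_of_mem hxb',
          cyc_deg hcyc hvt]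
      · have heq : nbrs G' (t.erase x) v = nbrs G t v := by
          ext w
          simp only [mem_nbrs, Finset.mem_erase]
          rw [hG', adj_sup_edge hzb]
          constructor
          · rintro ⟨⟨hwx, hwt⟩, (h | ⟨hbad, -⟩ | ⟨hbad, -⟩)⟩
            · exact ⟨hwt, h⟩
            · exact absurd hbad hvz
            · exact absurd hbad hvb
          · rintro ⟨hwt, h⟩
            have hwx : w ≠ x := by
              intro hwx'
              have hvnb : v ∈ nbrs G t x := mem_nbrs.mpr ⟨hvt, (hwx' ▸ h).symm⟩
              rw [hnb] at hvnb
              rcases Finset.mem_insert.mp hvnb with h' | h'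
              · exact hvz h'
              · exact hvb (Finset.mem_singleton.mp h')
            exact ⟨⟨hwx, hwt⟩, Or.inl h⟩
        rw [heq, cyc_deg hcyc hvt]

end Struct

section Count
set_option linter.unusedSectionVars false
variable {V : Type*} [Fintype V] [DecidableEq V]

/-- cycles through the adjacent pair `x b` whose other vertices lie in `s`. -/
noncomputable def famD (G : SimpleGraph V) (s : Finset V) (x b : V) : Finset (Finset V) :=
  (cycFinset G).filter (fun t => x ∈ t ∧ b ∈ t ∧ t ⊆ insert x (insert b s))

lemma mem_famD {G : SimpleGraph V} {s : Finset V} {x b : V} {t : Finset V} :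
    t ∈ famD G s x b ↔ (IsInducedCycle G ↑t ∧ x ∈ t ∧ b ∈ t ∧ t ⊆ insert x (insert b s)) := by
  simp [famD, mem_cycFinset]

lemma cycle_card_ge {G : SimpleGraph V} {t : Finset V} (h : IsInducedCycle G ↑t) :
    3 ≤ t.card := by
  have := h.2.1
  rwa [Set.ncard_coe_finset] at this

lemma rho_arith {c d : ℕ} (hdc : d ≤ c) :
    (d:ℝ) + d * (3 * rho ^ (c - d) - 2) ≤ 3 * rho ^ c - 2 := by
  rcases Nat.eq_zero_or_pos d with rfl | hd
  · simp only [Nat.cast_zero, zero_mul, add_zero, Nat.sub_zero]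
    linarith [one_le_rho_pow c]
  rcases eq_or_lt_of_le (show 1 ≤ d from hd) with h1 | h2
  · -- d = 1
    have hd1 : d = 1 := h1.symm
    subst hd1
    have hc1 : c - 1 + 1 = c := Nat.succ_pred_eq_of_pos hdc
    have hsplit : rho ^ c = rho ^ (c-1) * rho := by
      rw [← pow_succ, hc1]
    have h2 : (1:ℝ) ≤ rho ^ (c-1) := one_le_rho_pow _
    have h3 : (4:ℝ)/3 ≤ rho := fourthird_le_rho
    have hprod : (1:ℝ) * (1/3) ≤ rho ^ (c-1) * (rho - 1) := by
      apply mul_le_mul h2 (by linarith) (by norm_num) (by linarith)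
    rw [hsplit]
    push_cast
    nlinarith [hprod]
  · -- 2 ≤ d
    have hkey : (d:ℝ) * rho ^ (c - d) ≤ rho ^ c := by
      calc (d:ℝ) * rho ^ (c-d) ≤ rho ^ d * rho ^ (c-d) := by
            apply mul_le_mul_of_nonneg_right (nat_le_rho_pow d)
            exact pow_nonneg rho_pos.le _
        _ = rho ^ c := by rw [← pow_add]; congr 1; omega
    have hd2 : (2:ℝ) ≤ (d:ℝ) := by exact_mod_cast h2
    nlinarith [hkey]

lemma famD_bound : ∀ (k : ℕ) (G : SimpleGraph V) (s : Finset V) (x b : V),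
    s.card ≤ k → x ∉ s → b ∉ s → G.Adj x b →
    ((famD G s x b).card : ℝ) ≤ 3 * rho ^ s.card - 2 := by
  intro k
  induction k with
  | zero =>
    intro G s x b hk _ _ hadj
    have hs : s = ∅ := Finset.card_eq_zero.mp (Nat.le_zero.mp hk)
    subst hs
    have hemp : famD G ∅ x b = ∅ := by
      apply Finset.eq_empty_of_forall_notMem
      intro t ht
      rw [mem_famD] at ht
      obtain ⟨hcyc, hxt, hbt, hsub⟩ := ht
      have h3 := cycle_card_ge hcyc
      have hcard : t.card ≤ 2 := by
        refine le_trans (Finset.card_le_card hsub) ?_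
        refine le_trans (Finset.card_insert_le _ _) ?_
        simp
      omega
    rw [hemp]
    simp only [Finset.card_empty, Nat.cast_zero, Finset.card_empty, pow_zero]
    norm_num
  | succ k ih =>
    intro G s x b hk hxs hbs hadj
    have hxb : x ≠ b := G.ne_of_adj hadj
    set N := nbrs G s x with hN
    set d := N.card with hd
    set s' := s \ N with hs'
    have hNsub : N ⊆ s := fun w hw => (mem_nbrs.mp hw).1
    have hscard : s'.card = s.card - d := by rw [hs', Finset.card_sdiff_of_subset hNsub]
    -- the two parts
    set F3 := (famD G s x b).filter (fun t => t.card = 3) with hF3def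
    set F4 := (famD G s x b).filter (fun t => ¬ t.card = 3) with hF4def
    have hsplit : (famD G s x b).card = F3.card + F4.card := by
      rw [hF3def, hF4def]
      exact (Finset.card_filter_add_card_filter_not _).symm
    -- nbrs of x inside a cycle t of the family
    have hkey : ∀ t ∈ famD G s x b, ∀ z, z ∈ nbrs G t x → z ≠ b →
        (z ∈ N ∧ nbrs G t x = {z, b}) := by
      intro t ht z hz hzb
      rw [mem_famD] at ht
      obtain ⟨hcyc, hxt, hbt, hsub⟩ := ht
      obtain ⟨hzt, hxz⟩ := mem_nbrs.mp hz
      have hbnb : b ∈ nbrs G t x := mem_nbrs.mpr ⟨hbt, hadj⟩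
      have heq : ({z, b} : Finset V) = nbrs G t x := by
        apply Finset.eq_of_subset_of_card_le
        · intro w hw
          rcases Finset.mem_insert.mp hw with rfl | hw
          · exact hz
          · rwa [Finset.mem_singleton.mp hw]
        · rw [cyc_deg hcyc hxt, Finset.card_insert_of_notMem (by simp [hzb]),
            Finset.card_singleton]
      have hzx : z ≠ x := fun e => G.irrefl (e ▸ hxz)
      have hzs : z ∈ s := by
        rcases Finset.mem_insert.mp (hsub hzt) with h | h
        · exact absurd h hzx
        · rcases Finset.mem_insert.mp h with h | h
          · exact absurd h hzb
          · exact h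
      exact ⟨mem_nbrs.mpr ⟨hzs, hxz⟩, heq.symm⟩
    -- bound for F3
    have hF3 : F3.card ≤ d := by
      have : F3.card ≤ (N.image (fun z => ({z} : Finset V))).card := by
        apply Finset.card_le_card_of_injOn (fun t => (t.erase x).erase b)
        · intro t ht
          obtain ⟨htfam, hcard3⟩ := Finset.mem_filter.mp ht
          obtain ⟨hcyc, hxt, hbt, hsub⟩ := mem_famD.mp htfam
          have hbex : b ∈ t.erase x := Finset.mem_erase.mpr ⟨Ne.symm hxb, hbt⟩
          have h1 : ((t.erase x).erase b).card = 1 := by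
            rw [Finset.card_erase_of_mem hbex, Finset.card_erase_of_mem hxt, hcard3]
          obtain ⟨z, hz⟩ := Finset.card_eq_one.mp h1
          have hzmem : z ∈ (t.erase x).erase b := hz ▸ Finset.mem_singleton_self z
          have hzb : z ≠ b := (Finset.mem_erase.mp hzmem).1
          have hzx : z ≠ x := (Finset.mem_erase.mp (Finset.mem_erase.mp hzmem).2).1
          have hzt : z ∈ t := (Finset.mem_erase.mp (Finset.mem_erase.mp hzmem).2).2
          -- z is a neighbour of x in t
          have hnbeq : nbrs G t x = t.erase x := by
            apply Finset.eq_of_subset_of_card_le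
            · intro w hw
              obtain ⟨hwt, hxw⟩ := mem_nbrs.mp hw
              exact Finset.mem_erase.mpr ⟨fun e => G.irrefl (e ▸ hxw), hwt⟩
            · rw [Finset.card_erase_of_mem hxt, hcard3, cyc_deg hcyc hxt]
          have hznb : z ∈ nbrs G t x := by
            rw [hnbeq]
            exact Finset.mem_erase.mpr ⟨hzx, hzt⟩
          obtain ⟨hzN, -⟩ := hkey t htfam z hznb hzb
          show (t.erase x).erase b ∈ N.image (fun z => ({z} : Finset V))
          rw [hz]
          exact Finset.mem_image_of_mem _ hzN
        · intro t1 ht1 t2 ht2 hee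
          have hrebuild : ∀ t ∈ F3, t = insert x (insert b ((t.erase x).erase b)) := by
            intro t ht
            obtain ⟨htfam, -⟩ := Finset.mem_filter.mp ht
            obtain ⟨hcyc, hxt, hbt, hsub⟩ := mem_famD.mp htfam
            ext w
            simp only [Finset.mem_insert, Finset.mem_erase]
            constructor
            · intro hw
              by_cases h1 : w = x
              · exact Or.inl h1
              · by_cases h2 : w = b
                · exact Or.inr (Or.inl h2)
                · exact Or.inr (Or.inr ⟨h2, h1, hw⟩)
            · rintro (rfl | rfl | ⟨-, -, hw⟩)
              · exact hxt
              · exact hbt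
              · exact hw
          have hee' : (t1.erase x).erase b = (t2.erase x).erase b := hee
          rw [hrebuild t1 ht1, hrebuild t2 ht2, hee']
      calc F3.card ≤ _ := this
        _ ≤ N.card := Finset.card_image_le
        _ = d := rfl
    -- bound for F4
    have hF4 : (F4.card : ℝ) ≤ ∑ z ∈ N, ((famD (G ⊔ SimpleGraph.fromEdgeSet {s(z,b)}) s' z b).card : ℝ) := by
      have hcover : F4 ⊆ N.biUnion (fun z =>
          F4.filter (fun t => z ∈ nbrs G t x ∧ z ≠ b)) := by
        intro t ht
        obtain ⟨htf, hcard3⟩ := Finset.mem_filter.mp ht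
        obtain ⟨hcyc, hxt, hbt, hsub⟩ := mem_famD.mp htf
        -- x has two neighbours in t, one of them is b; pick the other
        have hdeg := cyc_deg hcyc hxt
        have hbnb : b ∈ nbrs G t x := mem_nbrs.mpr ⟨hbt, hadj⟩
        obtain ⟨u, v, huv, heq⟩ := Finset.card_eq_two.mp hdeg
        have hbuv : b = u ∨ b = v := by
          have := heq ▸ hbnb
          rcases Finset.mem_insert.mp this with h | h
          · exact Or.inl h
          · exact Or.inr (Finset.mem_singleton.mp h)
        -- the other neighbour z
        obtain ⟨z, hznb, hzb⟩ : ∃ z, z ∈ nbrs G t x ∧ z ≠ b := by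
          rcases hbuv with rfl | rfl
          · exact ⟨v, heq ▸ (by simp), fun e => huv e.symm⟩
          · exact ⟨u, heq ▸ (by simp), huv⟩
        obtain ⟨hzN, -⟩ := hkey t htf z hznb hzb
        rw [Finset.mem_biUnion]
        exact ⟨z, hzN, Finset.mem_filter.mpr ⟨ht, hznb, hzb⟩⟩
      have hstep : ∀ z ∈ N,
          (F4.filter (fun t => z ∈ nbrs G t x ∧ z ≠ b)).card
          ≤ (famD (G ⊔ SimpleGraph.fromEdgeSet {s(z,b)}) s' z b).card := by
        intro z hzN
        apply Finset.card_le_card_of_injOn (fun t => t.erase x)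
        · intro t ht
          obtain ⟨ht4, hznb, hzb⟩ := Finset.mem_filter.mp ht
          obtain ⟨htf, hne3⟩ := Finset.mem_filter.mp ht4
          obtain ⟨hcyc, hxt, hbt, hsub⟩ := mem_famD.mp htf
          obtain ⟨-, hnbt⟩ := hkey t htf z hznb hzb
          have hc3 := cycle_card_ge hcyc
          have hc4 : 4 ≤ t.card := by omega
          have hcyc' := cycle_erase hcyc hxt hnbt hzb hc4
          show t.erase x ∈ famD (G ⊔ SimpleGraph.fromEdgeSet {s(z,b)}) s' z b
          rw [mem_famD]
          obtain ⟨hzt, hxz⟩ := mem_nbrs.mp hznb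
          have hzx : z ≠ x := fun e => G.irrefl (e ▸ hxz)
          refine ⟨hcyc', Finset.mem_erase.mpr ⟨hzx, hzt⟩,
            Finset.mem_erase.mpr ⟨Ne.symm hxb, hbt⟩, ?_⟩
          intro w hw
          obtain ⟨hwx, hwt⟩ := Finset.mem_erase.mp hw
          by_cases hwz : w = z
          · simp [hwz]
          · by_cases hwb : w = b
            · simp [hwb]
            · have hws : w ∈ s := by
                rcases Finset.mem_insert.mp (hsub hwt) with h | h
                · exact absurd h hwx
                · rcases Finset.mem_insert.mp h with h | h
                  · exact absurd h hwb
                  · exact h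
              have hwN : w ∉ N := by
                intro hwN
                have hxw : G.Adj x w := (mem_nbrs.mp hwN).2
                have : w ∈ nbrs G t x := mem_nbrs.mpr ⟨hwt, hxw⟩
                rw [hnbt] at this
                rcases Finset.mem_insert.mp this with h | h
                · exact hwz h
                · exact hwb (Finset.mem_singleton.mp h)
              simp only [Finset.mem_insert]
              exact Or.inr (Or.inr (Finset.mem_sdiff.mpr ⟨hws, hwN⟩))
        · intro t1 ht1 t2 ht2 hee
          have hx1 : x ∈ t1 :=
            (mem_famD.mp (Finset.mem_filter.mp (Finset.mem_filter.mp ht1).1).1).2.1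
          have hx2 : x ∈ t2 :=
            (mem_famD.mp (Finset.mem_filter.mp (Finset.mem_filter.mp ht2).1).1).2.1
          have hee' : t1.erase x = t2.erase x := hee
          rw [← Finset.insert_erase hx1, ← Finset.insert_erase hx2, hee']
      calc (F4.card : ℝ) ≤ ((N.biUnion _).card : ℝ) := by
            exact_mod_cast Finset.card_le_card hcover
        _ ≤ ((∑ z ∈ N, (F4.filter (fun t => z ∈ nbrs G t x ∧ z ≠ b)).card : ℕ) : ℝ) := by
            exact_mod_cast Finset.card_biUnion_le
        _ ≤ _ := by
            push_cast
            apply Finset.sum_le_sum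
            intro z hz
            exact_mod_cast hstep z hz
    -- apply the induction hypothesis
    have hIH : ∀ z ∈ N, ((famD (G ⊔ SimpleGraph.fromEdgeSet {s(z,b)}) s' z b).card : ℝ)
        ≤ 3 * rho ^ (s.card - d) - 2 := by
      intro z hzN
      have hdpos : 1 ≤ d := by
        rw [hd]
        exact Finset.card_pos.mpr ⟨z, hzN⟩
      have hs'k : s'.card ≤ k := by
        rw [hscard]
        omega
      have hzs' : z ∉ s' := by
        rw [hs']
        simp [hzN]
      have hbs' : b ∉ s' := by
        rw [hs']
        simp [hbs]
      have hzb : z ≠ b := by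
        intro e
        subst e
        exact hbs (hNsub hzN)
      have hadj' : (G ⊔ SimpleGraph.fromEdgeSet {s(z,b)}).Adj z b := by
        rw [adj_sup_edge hzb]
        exact Or.inr (Or.inl ⟨rfl, rfl⟩)
      have := ih (G ⊔ SimpleGraph.fromEdgeSet {s(z,b)}) s' z b hs'k hzs' hbs' hadj'
      rwa [hscard] at this
    -- put it all together
    have hdc : d ≤ s.card := by
      rw [hd]
      exact Finset.card_le_card hNsub
    calc ((famD G s x b).card : ℝ)
        = (F3.card : ℝ) + (F4.card : ℝ) := by exact_mod_cast hsplit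
      _ ≤ (d : ℝ) + ∑ z ∈ N, ((famD (G ⊔ SimpleGraph.fromEdgeSet {s(z,b)}) s' z b).card : ℝ) := by
          have : (F3.card : ℝ) ≤ (d : ℝ) := by exact_mod_cast hF3
          linarith [hF4]
      _ ≤ (d : ℝ) + ∑ _z ∈ N, (3 * rho ^ (s.card - d) - 2) := by
          gcongr with z hz
          exact hIH z hz
      _ = (d : ℝ) + d * (3 * rho ^ (s.card - d) - 2) := by
          rw [Finset.sum_const, hd]
          push_cast
          ring
      _ ≤ 3 * rho ^ s.card - 2 := rho_arith hdc

end Count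

section InBound
set_option linter.unusedSectionVars false
variable {V : Type*} [Fintype V] [DecidableEq V]

lemma cycles_in_bound (G : SimpleGraph V) (W : Finset V) :
    (((cycFinset G).filter (fun t => t ⊆ W)).card : ℝ)
      ≤ (W.card : ℝ)^2 * (3 * rho ^ W.card) := by
  classical
  have hcover : (cycFinset G).filter (fun t => t ⊆ W) ⊆
      W.biUnion (fun x => W.biUnion (fun b =>
        if G.Adj x b then famD G ((W.erase x).erase b) x b else ∅)) := by
    intro t ht
    obtain ⟨htc, htW⟩ := Finset.mem_filter.mp ht
    have hcyc := mem_cycFinset.mp htc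
    have hc3 := cycle_card_ge hcyc
    have hne : t.Nonempty := Finset.card_pos.mp (by omega)
    obtain ⟨x, hxt⟩ := hne
    have hdeg := cyc_deg hcyc hxt
    obtain ⟨b, hbnb⟩ : ∃ b, b ∈ nbrs G t x := Finset.card_pos.mp (by omega)
    obtain ⟨hbt, hadj⟩ := mem_nbrs.mp hbnb
    rw [Finset.mem_biUnion]
    refine ⟨x, htW hxt, ?_⟩
    rw [Finset.mem_biUnion]
    refine ⟨b, htW hbt, ?_⟩
    rw [if_pos hadj, mem_famD]
    refine ⟨hcyc, hxt, hbt, ?_⟩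
    intro w hwt
    by_cases hwx : w = x
    · simp [hwx]
    · by_cases hwb : w = b
      · simp [hwb]
      · simp only [Finset.mem_insert]
        exact Or.inr (Or.inr (Finset.mem_erase.mpr ⟨hwb, Finset.mem_erase.mpr ⟨hwx, htW hwt⟩⟩))
  have hbound : ∀ x ∈ W, ∀ b ∈ W,
      (((if G.Adj x b then famD G ((W.erase x).erase b) x b else ∅)).card : ℝ)
        ≤ 3 * rho ^ W.card := by
    intro x hx b hb
    split_ifs with h
    · have hxp : x ∉ (W.erase x).erase b := by simp [Finset.mem_erase]
      have hbp : b ∉ (W.erase x).erase b := by simp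
      have hfb := famD_bound ((W.erase x).erase b).card G ((W.erase x).erase b) x b le_rfl
        hxp hbp h
      have hcle : ((W.erase x).erase b).card ≤ W.card :=
        Finset.card_le_card (le_trans (Finset.erase_subset _ _) (Finset.erase_subset _ _))
      have hpow : rho ^ ((W.erase x).erase b).card ≤ rho ^ W.card :=
        pow_le_pow_right₀ one_le_rho hcle
      linarith
    · simp only [Finset.card_empty, Nat.cast_zero]
      have := one_le_rho_pow W.card
      linarith
  have h1 : ((cycFinset G).filter (fun t => t ⊆ W)).card
      ≤ ∑ x ∈ W, ∑ b ∈ W,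
          (if G.Adj x b then famD G ((W.erase x).erase b) x b else ∅).card := by
    refine le_trans (Finset.card_le_card hcover) ?_
    refine le_trans Finset.card_biUnion_le ?_
    exact Finset.sum_le_sum (fun x _ => Finset.card_biUnion_le)
  calc (((cycFinset G).filter (fun t => t ⊆ W)).card : ℝ)
      ≤ ((∑ x ∈ W, ∑ b ∈ W,
          (if G.Adj x b then famD G ((W.erase x).erase b) x b else ∅).card : ℕ) : ℝ) := by
        exact_mod_cast h1
    _ ≤ ∑ x ∈ W, ∑ b ∈ W, (3 * rho ^ W.card) := by
        push_cast
        refine Finset.sum_le_sum (fun x hx => Finset.sum_le_sum (fun b hb => ?_))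
        exact_mod_cast hbound x hx b hb
    _ = (W.card : ℝ)^2 * (3 * rho ^ W.card) := by
        rw [Finset.sum_const, Finset.sum_const]
        push_cast
        ring

end InBound

section LowerBound

/-- part of a vertex -/
def part (u : ℕ) : ℕ := u / 3

/-- `b` follows `a` cyclically among `0,…,t-1`. -/
def consec (t a b : ℕ) : Prop := (a + 1 = b) ∨ (a = t - 1 ∧ b = 0)

instance (t a b : ℕ) : Decidable (consec t a b) := by unfold consec; infer_instance

/-- the cyclic blow-up graph -/
def blow (n t : ℕ) : SimpleGraph (Fin n) :=
  SimpleGraph.fromRel (fun u v => part u.val < t ∧ part v.val < t ∧ consec t (part u.val) (part v.val))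

def embv (n t : ℕ) (htn : 3*t ≤ n) (g : Fin t → Fin 3) (i : Fin t) : Fin n :=
  ⟨3 * i.val + (g i).val, by have h1 := i.isLt; have h2 := (g i).isLt; omega⟩

lemma part_embv {n t : ℕ} (htn : 3*t ≤ n) (g : Fin t → Fin 3) (i : Fin t) :
    part ((embv n t htn g i).val) = i.val := by
  have h2 := (g i).isLt
  simp only [embv, part]
  omega

lemma embv_inj {n t : ℕ} (htn : 3*t ≤ n) (g : Fin t → Fin 3) :
    Function.Injective (embv n t htn g) := by
  intro i j hij
  have h1 : ((embv n t htn g i).val) = ((embv n t htn g j).val) := by rw [hij]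
  have h2 := (g i).isLt
  have h3 := (g j).isLt
  simp only [embv] at h1
  have : i.val = j.val := by omega
  exact Fin.ext this

def sg (n t : ℕ) (htn : 3*t ≤ n) (g : Fin t → Fin 3) : Finset (Fin n) :=
  Finset.univ.image (embv n t htn g)

lemma mem_sg {n t : ℕ} (htn : 3*t ≤ n) (g : Fin t → Fin 3) (u : Fin n) :
    u ∈ sg n t htn g ↔ ∃ i, embv n t htn g i = u := by
  simp [sg]

lemma adj_embv {n t : ℕ} (ht3 : 3 ≤ t) (htn : 3*t ≤ n) (g : Fin t → Fin 3) (i j : Fin t) :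
    (blow n t).Adj (embv n t htn g i) (embv n t htn g j) ↔
      (consec t i.val j.val ∨ consec t j.val i.val) := by
  rw [blow, SimpleGraph.fromRel_adj]
  rw [part_embv htn g i, part_embv htn g j]
  constructor
  · rintro ⟨hne, (⟨-, -, h⟩ | ⟨-, -, h⟩)⟩
    · exact Or.inl h
    · exact Or.inr h
  · intro h
    have hij : i ≠ j := by
      rintro rfl
      rcases h with h | h <;> (unfold consec at h; omega)
    refine ⟨fun e => hij (embv_inj htn g e), ?_⟩
    rcases h with h | h
    · exact Or.inl ⟨i.isLt, j.isLt, h⟩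
    · exact Or.inr ⟨j.isLt, i.isLt, h⟩

lemma consec_iff {t : ℕ} (ht3 : 3 ≤ t) {a b : ℕ} (ha : a < t) (hb : b < t) :
    consec t a b ↔ b = (if a = t - 1 then 0 else a + 1) := by
  unfold consec
  split_ifs with h <;> omega

lemma isInducedCycle_sg {n t : ℕ} (ht3 : 3 ≤ t) (htn : 3*t ≤ n) (g : Fin t → Fin 3) :
    IsInducedCycle (blow n t) ↑(sg n t htn g) := by
  have hcard : (sg n t htn g).card = t := by
    rw [sg, Finset.card_image_of_injective _ (embv_inj htn g), Finset.card_univ, Fintype.card_fin]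
  refine ⟨(sg n t htn g).finite_toSet, ?_, ?_, ?_⟩
  · rw [Set.ncard_coe_finset, hcard]; omega
  · -- connectivity
    have h0t : (0 : ℕ) < t := by omega
    have hmem : ∀ (j : ℕ) (hj : j < t),
        embv n t htn g ⟨j, hj⟩ ∈ (↑(sg n t htn g) : Set (Fin n)) :=
      fun j hj => Finset.mem_coe.mpr ((mem_sg htn g _).mpr ⟨⟨j, hj⟩, rfl⟩)
    have hreach : ∀ (j : ℕ) (hj : j < t),
        ((blow n t).induce ↑(sg n t htn g)).Reachable
          ⟨embv n t htn g ⟨0, h0t⟩, hmem 0 h0t⟩ ⟨embv n t htn g ⟨j, hj⟩, hmem j hj⟩ := by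
      intro j
      induction j with
      | zero => intro hj; rfl
      | succ j ihj =>
        intro hjt
        have hj : j < t := by omega
        refine (ihj hj).trans (SimpleGraph.Adj.reachable ?_)
        have hadj : (blow n t).Adj (embv n t htn g ⟨j, hj⟩) (embv n t htn g ⟨j+1, hjt⟩) := by
          rw [adj_embv ht3 htn]
          exact Or.inl (Or.inl rfl)
        exact hadj
    rw [SimpleGraph.connected_iff]
    constructor
    · rintro ⟨u, hu⟩ ⟨w, hw⟩
      obtain ⟨i, hi⟩ := (mem_sg htn g u).mp (Finset.mem_coe.mp hu)
      obtain ⟨j, hj⟩ := (mem_sg htn g w).mp (Finset.mem_coe.mp hw)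
      have h1 := hreach i.val i.isLt
      have h2 := hreach j.val j.isLt
      have e1 : (⟨embv n t htn g ⟨i.val, i.isLt⟩, hmem i.val i.isLt⟩ :
          (↑(sg n t htn g) : Set (Fin n))) = ⟨u, hu⟩ := by
        apply Subtype.ext
        simpa [Fin.eta] using hi
      have e2 : (⟨embv n t htn g ⟨j.val, j.isLt⟩, hmem j.val j.isLt⟩ :
          (↑(sg n t htn g) : Set (Fin n))) = ⟨w, hw⟩ := by
        apply Subtype.ext
        simpa [Fin.eta] using hj
      rw [e1] at h1
      rw [e2] at h2
      exact h1.symm.trans h2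
    · exact ⟨⟨embv n t htn g ⟨0, h0t⟩, hmem 0 h0t⟩⟩
  · -- degrees
    intro v hv
    obtain ⟨i, rfl⟩ := (mem_sg htn g v).mp (Finset.mem_coe.mp hv)
    rw [nbrs_ncard]
    have hilt := i.isLt
    set a : ℕ := if i.val = t - 1 then 0 else i.val + 1 with ha
    set p : ℕ := if i.val = 0 then t - 1 else i.val - 1 with hp
    have halt : a < t := by rw [ha]; split_ifs <;> omega
    have hplt : p < t := by rw [hp]; split_ifs <;> omega
    have hap : a ≠ p := by rw [ha, hp]; split_ifs <;> omega
    have hconsec_ia : consec t i.val a := by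
      rw [ha]; unfold consec; split_ifs with h <;> omega
    have hconsec_pi : consec t p i.val := by
      rw [hp]; unfold consec; split_ifs with h <;> omega
    have heq : nbrs (blow n t) (sg n t htn g) (embv n t htn g i)
        = {embv n t htn g ⟨a, halt⟩, embv n t htn g ⟨p, hplt⟩} := by
      ext w
      rw [mem_nbrs]
      constructor
      · rintro ⟨hwsg, hadj⟩
        obtain ⟨j, rfl⟩ := (mem_sg htn g w).mp hwsg
        rw [adj_embv ht3 htn] at hadj
        have hjlt := j.isLt
        have hval : j.val = a ∨ j.val = p := by
          unfold consec at hadj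
          rw [ha, hp]
          split_ifs <;> omega
        simp only [Finset.mem_insert, Finset.mem_singleton]
        rcases hval with h | h
        · exact Or.inl (congrArg (embv n t htn g) (Fin.ext h))
        · exact Or.inr (congrArg (embv n t htn g) (Fin.ext h))
      · intro hw
        rcases Finset.mem_insert.mp hw with rfl | hw
        · refine ⟨(mem_sg htn g _).mpr ⟨_, rfl⟩, ?_⟩
          rw [adj_embv ht3 htn]
          exact Or.inl hconsec_ia
        · rw [Finset.mem_singleton] at hw
          subst hw
          refine ⟨(mem_sg htn g _).mpr ⟨_, rfl⟩, ?_⟩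
          rw [adj_embv ht3 htn]
          exact Or.inr hconsec_pi
    rw [heq, Finset.card_insert_of_notMem, Finset.card_singleton]
    rw [Finset.mem_singleton]
    intro hcon
    have h1 := embv_inj htn g hcon
    have h2 : a = p := congrArg Fin.val h1
    exact hap h2

lemma maxInducedCycles_bddAbove (n : ℕ) :
    BddAbove {k : ℕ | ∃ G : SimpleGraph (Fin n), numInducedCycles G = k} := by
  refine ⟨Fintype.card (Finset (Fin n)), ?_⟩
  rintro k ⟨G, rfl⟩
  rw [numInducedCycles_eq]
  exact Finset.card_le_univ _

lemma le_maxInducedCycles {n : ℕ} (G : SimpleGraph (Fin n)) :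
    numInducedCycles G ≤ maxInducedCycles n :=
  le_csSup (maxInducedCycles_bddAbove n) ⟨G, rfl⟩

lemma maxInducedCycles_ge (n : ℕ) (h9 : 9 ≤ n) : 3 ^ (n/3) ≤ maxInducedCycles n := by
  set t := n / 3 with htdef
  have ht3 : 3 ≤ t := by omega
  have htn : 3 * t ≤ n := by omega
  have hcount : 3 ^ t ≤ numInducedCycles (blow n t) := by
    rw [numInducedCycles_eq]
    have hinj : Function.Injective (fun g : Fin t → Fin 3 => sg n t htn g) := by
      intro g g' hgg
      funext i
      have hgg' : sg n t htn g = sg n t htn g' := hgg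
      have h1 : embv n t htn g i ∈ sg n t htn g' := by
        rw [← hgg']
        exact (mem_sg htn g _).mpr ⟨i, rfl⟩
      obtain ⟨j, hj⟩ := (mem_sg htn g' _).mp h1
      have hval : 3 * j.val + (g' j).val = 3 * i.val + (g i).val := congrArg Fin.val hj
      have h2 := (g' j).isLt
      have h3 := (g i).isLt
      have hij : j.val = i.val := by omega
      have : (g' j).val = (g i).val := by omega
      rw [show j = i from Fin.ext hij] at this
      exact Fin.ext this.symm
    calc 3 ^ t = Fintype.card (Fin t → Fin 3) := by
          rw [Fintype.card_fun]
          simp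
      _ = (Finset.univ : Finset (Fin t → Fin 3)).card := Finset.card_univ.symm
      _ ≤ (cycFinset (blow n t)).card := by
          apply Finset.card_le_card_of_injOn (fun g => sg n t htn g)
          · intro g _
            show sg n t htn g ∈ cycFinset (blow n t)
            rw [mem_cycFinset]
            exact isInducedCycle_sg ht3 htn g
          · intro g1 _ g2 _ h
            exact hinj h
  exact le_trans hcount (le_maxInducedCycles _)

end LowerBound

section Binom

lemma choose_identity (a b : ℕ) (ha : 1 ≤ a) (hb : 1 ≤ b) :
    a * (a-1).choose (b-1) = a.choose b * b := by
  have := Nat.add_one_mul_choose_eq (a-1) (b-1)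
  have e1 : a-1+1 = a := by omega
  have e2 : b-1+1 = b := by omega
  rw [e1, e2] at this
  exact this

lemma choose_step_le {a b : ℕ} (hb : 1 ≤ b) (hba : b ≤ a) :
    (a-1).choose (b-1) ≤ a.choose b := by
  have ha : 1 ≤ a := le_trans hb hba
  have hid := choose_identity a b ha hb
  have h1 : b * (a-1).choose (b-1) ≤ a * (a-1).choose (b-1) :=
    Nat.mul_le_mul_right _ hba
  rw [hid] at h1
  have h2 : b * (a-1).choose (b-1) ≤ b * a.choose b := by
    rw [mul_comm (a.choose b) b] at h1
    exact h1
  exact Nat.le_of_mul_le_mul_left h2 hb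

lemma choose_diag_mono {a b : ℕ} (hba : b ≤ a) :
    ∀ (d j : ℕ), j + d ≤ b → (a-(j+d)).choose (b-(j+d)) ≤ (a-j).choose (b-j) := by
  intro d
  induction d with
  | zero => intro j _; simp
  | succ d ihd =>
    intro j hjd
    have h1 : (j+1) + d ≤ b := by omega
    calc (a-(j+(d+1))).choose (b-(j+(d+1)))
        = ((a-(j+1))-d).choose ((b-(j+1))-d) := by congr 1 <;> omega
      _ ≤ (a-(j+1)).choose (b-(j+1)) := by
          have := ihd (j+1) h1
          calc ((a-(j+1))-d).choose ((b-(j+1))-d)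
              = (a-((j+1)+d)).choose (b-((j+1)+d)) := by congr 1 <;> omega
            _ ≤ _ := this
      _ = ((a-j)-1).choose ((b-j)-1) := by congr 1 <;> omega
      _ ≤ (a-j).choose (b-j) := choose_step_le (by omega) (by omega)

lemma choose_ratio {a b : ℕ} : ∀ (l : ℕ), l ≤ b → b ≤ a → (∀ i, i < l → a - i ≤ 3*(b-i)) →
    a.choose b ≤ 3^l * ((a-l).choose (b-l)) := by
  intro l
  induction l with
  | zero => intro _ _ _; simp
  | succ l ihl =>
    intro hl hba hcond
    have h1 : a.choose b ≤ 3^l * ((a-l).choose (b-l)) :=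
      ihl (by omega) hba (fun i hi => hcond i (by omega))
    have hstep : (a-l).choose (b-l) ≤ 3 * ((a-(l+1)).choose (b-(l+1))) := by
      set A := a - l with hA
      set B := b - l with hB
      have hB1 : 1 ≤ B := by omega
      have hA1 : 1 ≤ A := by omega
      have hBA : B ≤ A := by omega
      have hid := choose_identity A B hA1 hB1
      have hAB3 : A ≤ 3 * B := by
        have := hcond l (by omega)
        omega
      have h2 : A.choose B * B = A * (A-1).choose (B-1) := hid.symm
      have h3 : A * (A-1).choose (B-1) ≤ 3 * B * ((A-1).choose (B-1)) :=
        Nat.mul_le_mul_right _ hAB3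
      have h4 : A.choose B * B ≤ (3 * ((A-1).choose (B-1))) * B := by
        rw [h2]
        calc A * (A-1).choose (B-1) ≤ 3 * B * ((A-1).choose (B-1)) := h3
          _ = (3 * ((A-1).choose (B-1))) * B := by ring
      have h5 : A.choose B ≤ 3 * ((A-1).choose (B-1)) :=
        Nat.le_of_mul_le_mul_right h4 hB1
      calc (a-l).choose (b-l) = A.choose B := rfl
        _ ≤ 3 * ((A-1).choose (B-1)) := h5
        _ = 3 * ((a-(l+1)).choose (b-(l+1))) := by congr 2 <;> omega
    calc a.choose b ≤ 3^l * ((a-l).choose (b-l)) := h1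
      _ ≤ 3^l * (3 * ((a-(l+1)).choose (b-(l+1)))) := Nat.mul_le_mul_left _ hstep
      _ = 3^(l+1) * ((a-(l+1)).choose (b-(l+1))) := by ring

end Binom

section DoubleCount
set_option linter.unusedSectionVars false
variable {V : Type*} [Fintype V] [DecidableEq V]

lemma sum_card_filter_subset (S : Finset (Finset V)) (P : Finset (Finset V)) :
    ∑ W ∈ P, (S.filter (fun C => C ⊆ W)).card
      = ∑ C ∈ S, (P.filter (fun W => C ⊆ W)).card := by
  simp_rw [Finset.card_filter]
  exact Finset.sum_comm

lemma sum_card_through (𝒞 : Finset (Finset V)) :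
    ∑ v ∈ (Finset.univ : Finset V), (𝒞.filter (fun C => v ∈ C)).card
      = ∑ C ∈ 𝒞, C.card := by
  simp_rw [Finset.card_filter]
  rw [Finset.sum_comm]
  apply Finset.sum_congr rfl
  intro C _
  rw [Finset.sum_ite_mem, Finset.univ_inter]
  simp

lemma card_supersets (C : Finset V) {w : ℕ} (hw : C.card ≤ w) :
    ((Finset.univ.powersetCard w).filter (fun W => C ⊆ W)).card
      = (Fintype.card V - C.card).choose (w - C.card) := by
  classical
  have hkey : ((Finset.univ.powersetCard w).filter (fun W => C ⊆ W)).card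
      = (((Finset.univ : Finset V) \ C).powersetCard (w - C.card)).card := by
    apply Finset.card_bij' (fun W _ => W \ C) (fun X _ => X ∪ C)
    · intro W hW
      obtain ⟨hWp, hCW⟩ := Finset.mem_filter.mp hW
      obtain ⟨hWu, hWc⟩ := Finset.mem_powersetCard.mp hWp
      rw [Finset.mem_powersetCard]
      constructor
      · intro y hy
        rw [Finset.mem_sdiff] at hy ⊢
        exact ⟨Finset.mem_univ y, hy.2⟩
      · rw [Finset.card_sdiff_of_subset hCW, hWc]
    · intro X hX
      obtain ⟨hXu, hXc⟩ := Finset.mem_powersetCard.mp hX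
      have hdisj : ∀ y ∈ X, y ∉ C := by
        intro y hy
        exact (Finset.mem_sdiff.mp (hXu hy)).2
      rw [Finset.mem_filter, Finset.mem_powersetCard]
      refine ⟨⟨fun y _ => Finset.mem_univ y, ?_⟩, Finset.subset_union_right⟩
      rw [Finset.card_union_of_disjoint, hXc]
      · omega
      · rw [Finset.disjoint_left]
        exact hdisj
    · intro W hW
      obtain ⟨-, hCW⟩ := Finset.mem_filter.mp hW
      exact Finset.sdiff_union_of_subset hCW
    · intro X hX
      obtain ⟨hXu, -⟩ := Finset.mem_powersetCard.mp hX
      have hdisj : ∀ y ∈ X, y ∉ C := by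
        intro y hy
        exact (Finset.mem_sdiff.mp (hXu hy)).2
      ext y
      rw [Finset.mem_sdiff, Finset.mem_union]
      constructor
      · rintro ⟨h1 | h1, h2⟩
        · exact h1
        · exact absurd h1 h2
      · intro hy
        exact ⟨Or.inl hy, hdisj y hy⟩
  rw [hkey, Finset.card_powersetCard, Finset.card_sdiff_of_subset (Finset.subset_univ C),
    Finset.card_univ]

end DoubleCount

section Numeric

lemma eventually_big (c : ℝ) (hc : 0 < c) :
    ∃ n₁ : ℕ, ∀ n, n₁ ≤ n → 90 * (n:ℝ)^2 < c * (3:ℝ) ^ ((n:ℝ)/42) := by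
  set r : ℝ := (3:ℝ) ^ (-(1:ℝ)/42) with hr
  have hrpos : 0 < r := Real.rpow_pos_of_pos (by norm_num) _
  have hrlt : r < 1 := by
    rw [hr]
    apply Real.rpow_lt_one_of_one_lt_of_neg (by norm_num)
    norm_num
  have hnorm : ‖r‖ < 1 := by
    rw [Real.norm_eq_abs, abs_of_pos hrpos]
    exact hrlt
  have hsum := summable_pow_mul_geometric_of_norm_lt_one 2 hnorm
  have hto := hsum.tendsto_atTop_zero
  have hev : ∀ᶠ n : ℕ in Filter.atTop, (n:ℝ)^2 * r^n < c/90 :=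
    hto.eventually_lt_const (by linarith)
  obtain ⟨n₁, hn₁⟩ := Filter.eventually_atTop.mp hev
  refine ⟨n₁, fun n hn => ?_⟩
  have h := hn₁ n hn
  have hpow : r ^ n = (3:ℝ) ^ (-(n:ℝ)/42) := by
    rw [hr, ← Real.rpow_natCast ((3:ℝ) ^ (-(1:ℝ)/42)) n,
      ← Real.rpow_mul (by norm_num : (0:ℝ) ≤ 3)]
    ring_nf
  have hmul : (3:ℝ) ^ (-(n:ℝ)/42) * (3:ℝ) ^ ((n:ℝ)/42) = 1 := by
    rw [← Real.rpow_add (by norm_num : (0:ℝ) < 3)]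
    have he : -(n:ℝ)/42 + (n:ℝ)/42 = 0 := by ring
    rw [he, Real.rpow_zero]
  have hBpos : (0:ℝ) < (3:ℝ) ^ ((n:ℝ)/42) := Real.rpow_pos_of_pos (by norm_num) _
  have h2 : (n:ℝ)^2 * r^n * (3:ℝ)^((n:ℝ)/42) < c/90 * (3:ℝ)^((n:ℝ)/42) := by
    exact mul_lt_mul_of_pos_right h hBpos
  rw [hpow] at h2
  have h3 : (n:ℝ)^2 * ((3:ℝ)^(-(n:ℝ)/42) * (3:ℝ)^((n:ℝ)/42)) < c/90 * (3:ℝ)^((n:ℝ)/42) := by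
    calc (n:ℝ)^2 * ((3:ℝ)^(-(n:ℝ)/42) * (3:ℝ)^((n:ℝ)/42))
        = (n:ℝ)^2 * (3:ℝ)^(-(n:ℝ)/42) * (3:ℝ)^((n:ℝ)/42) := by ring
      _ < _ := h2
  rw [hmul, mul_one] at h3
  linarith

end Numeric

set_option maxHeartbeats 1000000 in
/-- Lemma (existence of a popular vertex): any `n`-vertex graph with at least
`c·m(n)` induced cycles has a vertex lying on at least `(c/10)·m(n)` of them. -/
theorem exists_popular_vertex :
    ∀ c : ℝ, 0 < c → c ≤ 1 →
      ∃ n₀ : ℕ, ∀ n : ℕ, n₀ ≤ n → ∀ F : SimpleGraph (Fin n),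
        c * (maxInducedCycles n : ℝ) ≤ (numInducedCycles F : ℝ) →
        ∃ v : Fin n, (c / 10) * (maxInducedCycles n : ℝ) ≤
          (numInducedCyclesThrough F v : ℝ) := by
  intro c hc hc1
  obtain ⟨n₁, hn₁⟩ := eventually_big c hc
  refine ⟨max 126 n₁, fun n hn F hf => ?_⟩
  have hn126 : 126 ≤ n := le_trans (le_max_left _ _) hn
  have hnn1 : n₁ ≤ n := le_trans (le_max_right _ _) hn
  by_contra hcon
  push_neg at hcon
  set m : ℝ := (maxInducedCycles n : ℝ) with hm
  have hm0 : 0 ≤ m := Nat.cast_nonneg _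
  set 𝒞 := cycFinset F with h𝒞
  have hfeq : (numInducedCycles F : ℝ) = (𝒞.card : ℝ) := by rw [numInducedCycles_eq]
  set L : ℕ := n / 7 + 1 with hL
  set w : ℕ := n / 2 with hw
  have hLw : L ≤ w := by omega
  have hwn : w ≤ n := by omega
  have hcond : ∀ i, i < L → n - i ≤ 3*(w-i) := by intro i hi; omega
  set 𝒮 := 𝒞.filter (fun C => C.card ≤ L) with h𝒮
  set 𝒮' := 𝒞.filter (fun C => ¬ C.card ≤ L) with h𝒮'
  -- total incidence bound
  have hfv : ∀ v : Fin n, ((𝒞.filter (fun C => v ∈ C)).card : ℝ) ≤ (c/10) * m := by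
    intro v
    have h1 := hcon v
    rw [numInducedCyclesThrough_eq] at h1
    exact le_of_lt h1
  have hsum2 : ((∑ C ∈ 𝒞, C.card : ℕ) : ℝ) ≤ (n:ℝ) * ((c/10)*m) := by
    rw [← sum_card_through 𝒞]
    push_cast
    calc ∑ v ∈ (Finset.univ : Finset (Fin n)), ((𝒞.filter (fun C => v ∈ C)).card : ℝ)
        ≤ ∑ _v ∈ (Finset.univ : Finset (Fin n)), (c/10)*m :=
          Finset.sum_le_sum (fun v _ => hfv v)
      _ = (n:ℝ) * ((c/10)*m) := by
          rw [Finset.sum_const, Finset.card_univ, Fintype.card_fin, nsmul_eq_mul]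
  -- long cycles are few
  have hlong : ((𝒮'.card : ℝ)) ≤ (7/10) * c * m := by
    have hstep : (L+1) * 𝒮'.card ≤ ∑ C ∈ 𝒞, C.card := by
      calc (L+1) * 𝒮'.card = ∑ _C ∈ 𝒮', (L+1) := by
            rw [Finset.sum_const, smul_eq_mul, mul_comm]
        _ ≤ ∑ C ∈ 𝒮', C.card := by
            apply Finset.sum_le_sum
            intro C hC
            have h2 := (Finset.mem_filter.mp hC).2
            omega
        _ ≤ ∑ C ∈ 𝒞, C.card := by
            apply Finset.sum_le_sum_of_subset (Finset.filter_subset _ _)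
    have hcast : ((L:ℝ)+1) * (𝒮'.card : ℝ) ≤ (n:ℝ) * ((c/10)*m) := by
      refine le_trans ?_ hsum2
      exact_mod_cast hstep
    have hn7 : (n:ℝ) ≤ 7 * ((L:ℝ)+1) := by
      have h3 : n ≤ 7 * (L+1) := by omega
      exact_mod_cast h3
    have hL1 : (0:ℝ) < (L:ℝ)+1 := by positivity
    have hcm0 : 0 ≤ (c/10)*m := by positivity
    have h1 : ((L:ℝ)+1) * (𝒮'.card : ℝ) ≤ ((L:ℝ)+1) * ((7/10)*c*m) := by
      calc ((L:ℝ)+1) * (𝒮'.card : ℝ) ≤ (n:ℝ)*((c/10)*m) := hcast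
        _ ≤ (7*((L:ℝ)+1))*((c/10)*m) := mul_le_mul_of_nonneg_right hn7 hcm0
        _ = ((L:ℝ)+1) * ((7/10)*c*m) := by ring
    exact le_of_mul_le_mul_left h1 hL1
  -- many short cycles
  have hshort : (3/10)*c*m ≤ (𝒮.card : ℝ) := by
    have hsplitc : 𝒮.card + 𝒮'.card = 𝒞.card :=
      Finset.card_filter_add_card_filter_not _
    have hfm : c * m ≤ (𝒞.card : ℝ) := by rw [← hfeq]; exact hf
    have hcc : (𝒞.card : ℝ) = (𝒮.card:ℝ) + (𝒮'.card:ℝ) := by exact_mod_cast hsplitc.symm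
    linarith
  -- double counting over w-sets
  have hcount2 : ∀ C ∈ 𝒮,
      ((Finset.univ.powersetCard w).filter (fun W => C ⊆ W)).card
        = (n - C.card).choose (w - C.card) := by
    intro C hC
    have hcle : C.card ≤ L := (Finset.mem_filter.mp hC).2
    rw [card_supersets C (le_trans hcle hLw), Fintype.card_fin]
  have hmono : ∀ C ∈ 𝒮, (n-L).choose (w-L) ≤ (n - C.card).choose (w - C.card) := by
    intro C hC
    have hcle : C.card ≤ L := (Finset.mem_filter.mp hC).2
    have h4 := choose_diag_mono hwn (L - C.card) C.card (by omega)
    calc (n-L).choose (w-L) = (n-(C.card+(L-C.card))).choose (w-(C.card+(L-C.card))) := by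
          congr 1 <;> omega
      _ ≤ (n - C.card).choose (w - C.card) := h4
  have hlower : (𝒮.card) * ((n-L).choose (w-L))
      ≤ ∑ W ∈ Finset.univ.powersetCard w, (𝒮.filter (fun C => C ⊆ W)).card := by
    rw [sum_card_filter_subset]
    calc 𝒮.card * ((n-L).choose (w-L)) = ∑ _C ∈ 𝒮, ((n-L).choose (w-L)) := by
          rw [Finset.sum_const, smul_eq_mul]
      _ ≤ ∑ C ∈ 𝒮, ((Finset.univ.powersetCard w).filter (fun W => C ⊆ W)).card := by
          apply Finset.sum_le_sum
          intro C hC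
          rw [hcount2 C hC]
          exact hmono C hC
  have hupper : ((∑ W ∈ Finset.univ.powersetCard w, (𝒮.filter (fun C => C ⊆ W)).card : ℕ) : ℝ)
      ≤ (n.choose w : ℝ) * ((w:ℝ)^2 * (3 * rho ^ w)) := by
    push_cast
    calc ∑ W ∈ Finset.univ.powersetCard w, ((𝒮.filter (fun C => C ⊆ W)).card : ℝ)
        ≤ ∑ _W ∈ Finset.univ.powersetCard w, ((w:ℝ)^2 * (3 * rho ^ w)) := by
          apply Finset.sum_le_sum
          intro W hW
          have hWc : W.card = w := (Finset.mem_powersetCard.mp hW).2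
          have hsub : 𝒮.filter (fun C => C ⊆ W) ⊆ 𝒞.filter (fun C => C ⊆ W) :=
            Finset.filter_subset_filter _ (Finset.filter_subset _ _)
          calc ((𝒮.filter (fun C => C ⊆ W)).card : ℝ)
              ≤ ((𝒞.filter (fun C => C ⊆ W)).card : ℝ) := by
                exact_mod_cast Finset.card_le_card hsub
            _ ≤ (W.card : ℝ)^2 * (3 * rho ^ W.card) := cycles_in_bound F W
            _ = (w:ℝ)^2 * (3 * rho ^ w) := by rw [hWc]
      _ = (n.choose w : ℝ) * ((w:ℝ)^2 * (3 * rho ^ w)) := by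
          rw [Finset.sum_const, Finset.card_powersetCard, Finset.card_univ, Fintype.card_fin,
            nsmul_eq_mul]
  have hratio : ((n.choose w : ℕ) : ℝ) ≤ (3:ℝ)^L * (((n-L).choose (w-L) : ℕ) : ℝ) := by
    have := choose_ratio L hLw hwn hcond
    push_cast
    exact_mod_cast this
  have hchpos : (0:ℝ) < (((n-L).choose (w-L) : ℕ) : ℝ) := by
    have h5 : 0 < (n-L).choose (w-L) := Nat.choose_pos (by omega)
    exact_mod_cast h5
  -- main inequality
  have hmain : (3/10)*c*m ≤ (3:ℝ)^L * ((w:ℝ)^2 * (3 * rho ^ w)) := by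
    have h1 : (3/10)*c*m * (((n-L).choose (w-L) : ℕ) : ℝ)
        ≤ (𝒮.card:ℝ) * (((n-L).choose (w-L) : ℕ) : ℝ) :=
      mul_le_mul_of_nonneg_right hshort hchpos.le
    have h2 : (𝒮.card:ℝ) * (((n-L).choose (w-L) : ℕ) : ℝ)
        ≤ ((∑ W ∈ Finset.univ.powersetCard w, (𝒮.filter (fun C => C ⊆ W)).card : ℕ) : ℝ) := by
      exact_mod_cast hlower
    have h3 : (n.choose w : ℝ) * ((w:ℝ)^2 * (3 * rho ^ w))
        ≤ ((3:ℝ)^L * (((n-L).choose (w-L) : ℕ) : ℝ)) * ((w:ℝ)^2 * (3 * rho ^ w)) := by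
      apply mul_le_mul_of_nonneg_right hratio
      have h18 : (0:ℝ) ≤ rho ^ w := pow_nonneg rho_pos.le w
      have h19 : (0:ℝ) ≤ ((w:ℕ):ℝ)^2 := sq_nonneg _
      nlinarith
    have h4 : (3/10)*c*m * (((n-L).choose (w-L) : ℕ) : ℝ)
        ≤ ((3:ℝ)^L * ((w:ℝ)^2 * (3 * rho ^ w))) * (((n-L).choose (w-L) : ℕ) : ℝ) := by
      calc (3/10)*c*m * (((n-L).choose (w-L) : ℕ) : ℝ)
          ≤ (𝒮.card:ℝ) * (((n-L).choose (w-L) : ℕ) : ℝ) := h1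
        _ ≤ _ := h2
        _ ≤ (n.choose w : ℝ) * ((w:ℝ)^2 * (3 * rho ^ w)) := hupper
        _ ≤ ((3:ℝ)^L * (((n-L).choose (w-L) : ℕ) : ℝ)) * ((w:ℝ)^2 * (3 * rho ^ w)) := h3
        _ = ((3:ℝ)^L * ((w:ℝ)^2 * (3 * rho ^ w))) * (((n-L).choose (w-L) : ℕ) : ℝ) := by ring
    exact le_of_mul_le_mul_right h4 hchpos
  -- lower bound on m
  have hmlow : ((3:ℕ)^(n/3) : ℝ) ≤ m := by
    have h6 := maxInducedCycles_ge n (by omega)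
    rw [hm]
    exact_mod_cast h6
  -- translate to rpow and derive the numeric contradiction
  have hmlow2 : (3:ℝ) ^ ((n:ℝ)/3 - 1) ≤ m := by
    have h7 : 3 * (n/3) + 3 > n := by omega
    have h8 : (3:ℝ) * ((n/3 : ℕ):ℝ) + 3 > (n:ℝ) := by exact_mod_cast h7
    have ht' : (n:ℝ)/3 - 1 ≤ ((n/3 : ℕ) : ℝ) := by linarith
    calc (3:ℝ) ^ ((n:ℝ)/3 - 1) ≤ (3:ℝ) ^ (((n/3 : ℕ)):ℝ) := by
          apply Real.rpow_le_rpow_left_iff (by norm_num : (1:ℝ) < 3) |>.mpr ht'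
      _ = ((3:ℕ)^(n/3) : ℝ) := by
          rw [Real.rpow_natCast]
          push_cast
          ring
      _ ≤ m := hmlow
  have hrw : rho ^ w = (3:ℝ) ^ ((w:ℝ)/3) := by
    rw [rho, ← Real.rpow_natCast ((3:ℝ) ^ ((1:ℝ)/3)) w,
      ← Real.rpow_mul (by norm_num : (0:ℝ) ≤ 3)]
    congr 1
    ring
  have h3L : (3:ℝ)^L ≤ (3:ℝ) ^ ((n:ℝ)/7 + 1) := by
    have h10 : ((n/7 : ℕ):ℝ) * 7 ≤ (n:ℝ) := by
      exact_mod_cast Nat.div_mul_le_self n 7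
    have hL' : ((L:ℕ):ℝ) ≤ (n:ℝ)/7 + 1 := by
      have hLeq : ((L:ℕ):ℝ) = ((n/7 : ℕ):ℝ) + 1 := by rw [hL]; push_cast; ring
      rw [hLeq]
      linarith
    calc (3:ℝ)^L = (3:ℝ) ^ ((L:ℕ):ℝ) := (Real.rpow_natCast 3 L).symm
      _ ≤ (3:ℝ) ^ ((n:ℝ)/7 + 1) := by
          apply Real.rpow_le_rpow_left_iff (by norm_num : (1:ℝ) < 3) |>.mpr hL'
  have hrww : rho ^ w ≤ (3:ℝ) ^ ((n:ℝ)/6) := by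
    rw [hrw]
    apply Real.rpow_le_rpow_left_iff (by norm_num : (1:ℝ) < 3) |>.mpr
    have h11 : ((w:ℕ):ℝ) * 2 ≤ (n:ℝ) := by
      rw [hw]
      exact_mod_cast Nat.div_mul_le_self n 2
    linarith
  have hw2 : ((w:ℕ):ℝ)^2 ≤ (n:ℝ)^2 := by
    have h14 : ((w:ℕ):ℝ) ≤ (n:ℝ) := by exact_mod_cast hwn
    have h15 : (0:ℝ) ≤ ((w:ℕ):ℝ) := Nat.cast_nonneg _
    nlinarith
  have hkey : (3/10)*c*((3:ℝ) ^ ((n:ℝ)/3 - 1)) ≤ 3 * (n:ℝ)^2 * (3:ℝ) ^ ((n:ℝ)/7 + 1 + (n:ℝ)/6) := by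
    have hB2 : (0:ℝ) ≤ (3:ℝ) ^ ((n:ℝ)/7+1) := (Real.rpow_pos_of_pos (by norm_num) _).le
    have hB3 : (0:ℝ) ≤ rho ^ w := pow_nonneg rho_pos.le w
    have hB4 : (0:ℝ) ≤ (3:ℝ) ^ ((n:ℝ)/6) := (Real.rpow_pos_of_pos (by norm_num) _).le
    have step1 : (3/10)*c*((3:ℝ) ^ ((n:ℝ)/3 - 1)) ≤ (3/10)*c*m := by
      apply mul_le_mul_of_nonneg_left hmlow2
      linarith
    have step2 : (3:ℝ)^L * ((w:ℝ)^2 * (3 * rho ^ w))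
        ≤ (3:ℝ)^((n:ℝ)/7+1) * ((n:ℝ)^2 * (3 * (3:ℝ)^((n:ℝ)/6))) := by
      apply mul_le_mul h3L ?_ ?_ hB2
      · apply mul_le_mul hw2 ?_ ?_ (by positivity)
        · linarith [hrww]
        · linarith [hB3]
      · have h16 : (0:ℝ) ≤ ((w:ℕ):ℝ)^2 := sq_nonneg _
        have h17 : (0:ℝ) ≤ 3 * rho ^ w := by linarith
        nlinarith
    have step3 : (3:ℝ)^((n:ℝ)/7+1) * ((n:ℝ)^2 * (3 * (3:ℝ)^((n:ℝ)/6)))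
        = 3 * (n:ℝ)^2 * (3:ℝ) ^ ((n:ℝ)/7 + 1 + (n:ℝ)/6) := by
      rw [Real.rpow_add (by norm_num : (0:ℝ) < 3) ((n:ℝ)/7+1) ((n:ℝ)/6)]
      ring
    calc (3/10)*c*((3:ℝ) ^ ((n:ℝ)/3 - 1)) ≤ (3/10)*c*m := step1
      _ ≤ (3:ℝ)^L * ((w:ℝ)^2 * (3 * rho ^ w)) := hmain
      _ ≤ (3:ℝ)^((n:ℝ)/7+1) * ((n:ℝ)^2 * (3 * (3:ℝ)^((n:ℝ)/6))) := step2
      _ = 3 * (n:ℝ)^2 * (3:ℝ) ^ ((n:ℝ)/7 + 1 + (n:ℝ)/6) := step3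
  have hexp : (3:ℝ) ^ ((n:ℝ)/3 - 1)
      = (3:ℝ)^((n:ℝ)/42) * (3:ℝ)^((n:ℝ)/7+1+(n:ℝ)/6) * (3:ℝ)^(-(2:ℝ)) := by
    rw [← Real.rpow_add (by norm_num : (0:ℝ) < 3), ← Real.rpow_add (by norm_num : (0:ℝ) < 3)]
    congr 1
    ring
  have h32 : (3:ℝ)^(-(2:ℝ)) = 1/9 := by
    rw [show (-(2:ℝ)) = ((-2 : ℤ):ℝ) by norm_num, Real.rpow_intCast]
    norm_num
  have hBpos : (0:ℝ) < (3:ℝ)^((n:ℝ)/7+1+(n:ℝ)/6) := Real.rpow_pos_of_pos (by norm_num) _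
  have hfinal : c * (3:ℝ)^((n:ℝ)/42) ≤ 90 * (n:ℝ)^2 := by
    have h12 : ((1/30)*c*((3:ℝ)^((n:ℝ)/42))) * ((3:ℝ)^((n:ℝ)/7+1+(n:ℝ)/6))
        ≤ (3*(n:ℝ)^2) * ((3:ℝ)^((n:ℝ)/7+1+(n:ℝ)/6)) := by
      calc ((1/30)*c*((3:ℝ)^((n:ℝ)/42))) * ((3:ℝ)^((n:ℝ)/7+1+(n:ℝ)/6))
          = (3/10)*c*((3:ℝ)^((n:ℝ)/42) * (3:ℝ)^((n:ℝ)/7+1+(n:ℝ)/6) * (1/9)) := by ring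
        _ = (3/10)*c*((3:ℝ) ^ ((n:ℝ)/3 - 1)) := by rw [← h32, ← hexp]
        _ ≤ 3 * (n:ℝ)^2 * (3:ℝ) ^ ((n:ℝ)/7 + 1 + (n:ℝ)/6) := hkey
        _ = (3*(n:ℝ)^2) * ((3:ℝ)^((n:ℝ)/7+1+(n:ℝ)/6)) := by ring
    have h13 : (1/30)*c*((3:ℝ)^((n:ℝ)/42)) ≤ 3*(n:ℝ)^2 := le_of_mul_le_mul_right h12 hBpos
    linarith
  have hcontra := hn₁ n hnn1
  linarith [hcontra, hfinal]
end ExtremalInducedCycles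
end
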